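/- arXiv:2602.03496 — 3 statements merged into one kernel-verified Lean document; each statement's English description precedes it below -/
import Mathlib

section
/- (Han's inequality) For discrete random variables X_1,...,X_n on finite spaces with n ≥ 2, (n−1)·H(X_1,...,X_n) ≤ Σ_{i=1}^n H(X_1,...,X_{i−1},X_{i+1},...,X_n), i.e., n−1 times the joint entropy is at most the sum of the entropies of all (n−1)-element subsets obtained by leaving one variable out. -/
noncomputable section

/-- Shannon entropy of a distribution on a finite type. -/
def entropy {α : Type*} [Fintype α] (p : α → ℝ) : ℝ :=
  -∑ a, p a * Real.log (p a)

variable {n : ℕ} {X : Fin n → Type*} [∀ i, Fintype (X i)]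

open scoped Classical in
/-- Marginal of coordinate `i` of a joint distribution. -/
def marginal (p : (∀ i, X i) → ℝ) (i : Fin n) (a : X i) : ℝ :=
  ∑ x : ∀ j, X j, if x i = a then p x else 0

open scoped Classical in
/-- Marginal of a joint distribution on the coordinates in `S`. -/
def subMarginal (p : (∀ i, X i) → ℝ) (S : Finset (Fin n)) (z : ∀ i : S, X i.1) : ℝ :=
  ∑ x : ∀ j, X j, if ∀ i : S, x i.1 = z i then p x else 0

open scoped Classical in
/-- Conditional joint distribution given that the coordinates in `S` equal `z`. -/
def condDist (p : (∀ i, X i) → ℝ) (S : Finset (Fin n)) (z : ∀ i : S, X i.1) :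
    (∀ i, X i) → ℝ :=
  fun y => if ∀ i : S, y i.1 = z i then p y / subMarginal p S z else 0

/-- Total correlation of the variables indexed by `S`. -/
def TCsub (p : (∀ i, X i) → ℝ) (S : Finset (Fin n)) : ℝ :=
  (∑ i ∈ S, entropy (marginal p i)) - entropy (subMarginal p S)

/-- Expected conditional total correlation of the variables in `S` given those in `C`. -/
def expCondTC (p : (∀ i, X i) → ℝ) (S C : Finset (Fin n)) : ℝ :=
  ∑ z : ∀ i : C, X i.1, subMarginal p C z * TCsub (condDist p C z) S

/-! ### Auxiliary development for Han's inequality -/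

open scoped Classical in
/-- The marginal on `S` evaluated at the restriction of a full configuration. -/
def Pm (p : (∀ i, X i) → ℝ) (S : Finset (Fin n)) (x : ∀ i, X i) : ℝ :=
  ∑ y : ∀ j, X j, if ∀ i ∈ S, y i = x i then p y else 0

open scoped Classical

lemma Pm_eq (p : (∀ i, X i) → ℝ) (S : Finset (Fin n)) (x : ∀ i, X i) :
    Pm p S x = subMarginal p S (fun i => x i.1) := by
  unfold Pm subMarginal
  refine Finset.sum_congr rfl fun y _ => ?_
  have h : (∀ i ∈ S, y i = x i) ↔ (∀ i : S, y i.1 = x i.1) :=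
    ⟨fun h i => h i.1 i.2, fun h i hi => h ⟨i, hi⟩⟩
  by_cases hc : ∀ i ∈ S, y i = x i
  · rw [if_pos hc, if_pos (h.mp hc)]
  · rw [if_neg hc, if_neg fun hc' => hc (h.mpr hc')]

lemma Pm_nonneg (p : (∀ i, X i) → ℝ) (hp0 : ∀ x, 0 ≤ p x) (S : Finset (Fin n)) (x : ∀ i, X i) :
    0 ≤ Pm p S x := by
  refine Finset.sum_nonneg fun y _ => ?_
  split_ifs
  · exact hp0 y
  · exact le_rfl

lemma le_Pm (p : (∀ i, X i) → ℝ) (hp0 : ∀ x, 0 ≤ p x) (S : Finset (Fin n)) (x : ∀ i, X i) :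
    p x ≤ Pm p S x := by
  have h := Finset.single_le_sum (f := fun y : ∀ j, X j => if ∀ i ∈ S, y i = x i then p y else 0)
    (fun y _ => by split_ifs; exacts [hp0 y, le_rfl]) (Finset.mem_univ x)
  simpa [Pm] using h

lemma Pm_congr (p : (∀ i, X i) → ℝ) {S' R : Finset (Fin n)} (hR : R ⊆ S') {x y : ∀ i, X i}
    (h : ∀ i ∈ S', x i = y i) : Pm p R x = Pm p R y := by
  unfold Pm
  refine Finset.sum_congr rfl fun z _ => ?_
  have hiff : (∀ i ∈ R, z i = x i) ↔ (∀ i ∈ R, z i = y i) := by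
    constructor
    · intro hc i hi; rw [hc i hi, h i (hR hi)]
    · intro hc i hi; rw [hc i hi, ← h i (hR hi)]
  by_cases hc : ∀ i ∈ R, z i = x i
  · rw [if_pos hc, if_pos (hiff.mp hc)]
  · rw [if_neg hc, if_neg fun hc' => hc (hiff.mpr hc')]

lemma Pm_univ (p : (∀ i, X i) → ℝ) (x : ∀ i, X i) : Pm p Finset.univ x = p x := by
  unfold Pm
  have h : ∀ y : ∀ j, X j, (∀ i ∈ Finset.univ, y i = x i) ↔ y = x :=
    fun y => ⟨fun h => funext fun i => h i (Finset.mem_univ i), fun h i _ => by rw [h]⟩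
  calc ∑ y : ∀ j, X j, (if ∀ i ∈ Finset.univ, y i = x i then p y else 0)
      = ∑ y : ∀ j, X j, (if y = x then p y else 0) := by
        refine Finset.sum_congr rfl fun y _ => ?_
        by_cases hc : y = x
        · rw [if_pos ((h y).mpr hc), if_pos hc]
        · rw [if_neg fun hc' => hc ((h y).mp hc'), if_neg hc]
    _ = p x := by rw [Finset.sum_ite_eq' Finset.univ x p]; simp

lemma Pm_empty (p : (∀ i, X i) → ℝ) (hp1 : ∑ x, p x = 1) (x : ∀ i, X i) :
    Pm p ∅ x = 1 := by
  unfold Pm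
  simp [hp1]

/-- Key regrouping lemma: expectation of a function of the `S`-coordinates. -/
lemma sum_mul_restr (p : (∀ i, X i) → ℝ) (S : Finset (Fin n)) (F : (∀ i : S, X i.1) → ℝ) :
    ∑ z : ∀ i : S, X i.1, subMarginal p S z * F z = ∑ x : ∀ i, X i, p x * F (fun i => x i.1) := by
  unfold subMarginal
  simp only [Finset.sum_mul]
  rw [Finset.sum_comm]
  refine Finset.sum_congr rfl fun x _ => ?_
  have h : ∀ z : ∀ i : S, X i.1, (∀ i : S, x i.1 = z i) ↔ ((fun i : S => x i.1) = z) :=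
    fun z => ⟨fun h => funext h, fun h i => congrFun h i⟩
  calc ∑ z : ∀ i : S, X i.1, (if ∀ i : S, x i.1 = z i then p x else 0) * F z
      = ∑ z : ∀ i : S, X i.1, (if (fun i : S => x i.1) = z then p x * F z else 0) := by
        refine Finset.sum_congr rfl fun z _ => ?_
        by_cases hc : (fun i : S => x i.1) = z
        · rw [if_pos ((h z).mpr hc), if_pos hc]
        · rw [if_neg fun hc' => hc ((h z).mp hc'), if_neg hc, zero_mul]
    _ = p x * F (fun i => x i.1) := by
        rw [Finset.sum_ite_eq Finset.univ (fun i : S => x i.1) (fun z => p x * F z)]; simp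

lemma entropy_subMarginal (p : (∀ i, X i) → ℝ) (S : Finset (Fin n)) :
    entropy (subMarginal p S) = -∑ x : ∀ i, X i, p x * Real.log (Pm p S x) := by
  unfold entropy
  congr 1
  rw [sum_mul_restr p S (fun z => Real.log (subMarginal p S z))]
  exact Finset.sum_congr rfl fun x _ => by rw [Pm_eq]

lemma entropy_subMarginal_univ (p : (∀ i, X i) → ℝ) :
    entropy (subMarginal p Finset.univ) = entropy p := by
  rw [entropy_subMarginal]
  unfold entropy
  congr 1
  exact Finset.sum_congr rfl fun x _ => by rw [Pm_univ]

lemma entropy_subMarginal_empty (p : (∀ i, X i) → ℝ) (hp1 : ∑ x, p x = 1) :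
    entropy (subMarginal p ∅) = 0 := by
  rw [entropy_subMarginal]
  have h : ∀ x : ∀ i, X i, p x * Real.log (Pm p ∅ x) = 0 := fun x => by
    rw [Pm_empty p hp1, Real.log_one, mul_zero]
  simp [h]

/-- The crucial counting inequality. -/
lemma sum_q_le_one (p : (∀ i, X i) → ℝ) (hp0 : ∀ x, 0 ≤ p x) (hp1 : ∑ x, p x = 1)
    (S T : Finset (Fin n)) (hST : S ∪ T = Finset.univ) :
    ∑ x : ∀ i, X i, Pm p S x * Pm p T x / Pm p (S ∩ T) x ≤ 1 := by
  have hne : Nonempty (∀ i, X i) := by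
    by_contra h
    rw [not_nonempty_iff] at h
    rw [Finset.univ_eq_empty, Finset.sum_empty] at hp1
    exact one_ne_zero hp1.symm
  obtain ⟨x₀⟩ := hne
  set I := S ∩ T with hIdef
  have hScT : ∀ i, i ∉ S → i ∈ T := by
    intro i hi
    have hm : i ∈ S ∪ T := hST ▸ Finset.mem_univ i
    rcases Finset.mem_union.mp hm with h | h
    · exact absurd h hi
    · exact h
  let e := (Equiv.piEquivPiSubtypeProd (fun i => i ∈ S) X).symm
  have he : ∀ (u : ∀ i : {i // i ∈ S}, X i.1) (v : ∀ i : {i // ¬i ∈ S}, X i.1) (i : Fin n),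
      e (u, v) i = if h : i ∈ S then u ⟨i, h⟩ else v ⟨i, h⟩ := by
    intro u v i
    simp [e, Equiv.piEquivPiSubtypeProd_symm_apply]
  have hsum : ∑ x : ∀ i, X i, Pm p S x * Pm p T x / Pm p I x
      = ∑ w, Pm p S (e w) * Pm p T (e w) / Pm p I (e w) :=
    (Equiv.sum_comp e _).symm
  rw [hsum, Fintype.sum_prod_type]
  set v₀ : ∀ i : {i // ¬i ∈ S}, X i.1 := fun i => x₀ i.1 with hv₀
  have hagree : ∀ u v, ∀ i ∈ S, e (u, v) i = e (u, v₀) i := by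
    intro u v i hi
    rw [he, he, dif_pos hi, dif_pos hi]
  -- summing the T-marginal over the non-S coordinates gives the I-marginal
  have hC : ∀ u, ∑ v, Pm p T (e (u, v)) = Pm p I (e (u, v₀)) := by
    intro u
    unfold Pm
    rw [Finset.sum_comm]
    refine Finset.sum_congr rfl fun y _ => ?_
    set vy : ∀ i : {i // ¬i ∈ S}, X i.1 := fun i => y i.1 with hvy
    by_cases hA : ∀ i ∈ I, y i = e (u, v₀) i
    · rw [if_pos hA]
      have key : ∀ v, (∀ i ∈ T, y i = e (u, v) i) ↔ v = vy := by
        intro v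
        constructor
        · intro hc
          funext j
          have := hc j.1 (hScT j.1 j.2)
          rw [he, dif_neg j.2] at this
          exact this.symm
        · rintro rfl i hiT
          by_cases hiS : i ∈ S
          · have hiI : i ∈ I := Finset.mem_inter.mpr ⟨hiS, hiT⟩
            have h1 := hA i hiI
            rw [he, dif_pos hiS] at h1
            rw [he, dif_pos hiS]
            exact h1
          · rw [he, dif_neg hiS]
      calc ∑ v, (if ∀ i ∈ T, y i = e (u, v) i then p y else 0)
          = ∑ v, (if v = vy then p y else 0) := by
            refine Finset.sum_congr rfl fun v _ => ?_
            by_cases hc : v = vy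
            · rw [if_pos ((key v).mpr hc), if_pos hc]
            · rw [if_neg fun hc' => hc ((key v).mp hc'), if_neg hc]
        _ = p y := by rw [Finset.sum_ite_eq' Finset.univ vy (fun _ => p y)]; simp
    · rw [if_neg hA]
      refine Finset.sum_eq_zero fun v _ => ?_
      rw [if_neg]
      intro hc
      apply hA
      intro i hiI
      have hiS : i ∈ S := (Finset.mem_inter.mp hiI).1
      have hiT : i ∈ T := (Finset.mem_inter.mp hiI).2
      have h1 := hc i hiT
      rw [he, dif_pos hiS] at h1
      rw [he, dif_pos hiS]
      exact h1
  -- summing the S-marginal over all S-configurations gives 1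
  have hD : ∑ u, Pm p S (e (u, v₀)) = 1 := by
    unfold Pm
    rw [Finset.sum_comm]
    calc ∑ y : ∀ j, X j, ∑ u, (if ∀ i ∈ S, y i = e (u, v₀) i then p y else 0)
        = ∑ y : ∀ j, X j, p y := by
          refine Finset.sum_congr rfl fun y _ => ?_
          set uy : ∀ i : {i // i ∈ S}, X i.1 := fun i => y i.1 with huy
          have key : ∀ u, (∀ i ∈ S, y i = e (u, v₀) i) ↔ u = uy := by
            intro u
            constructor
            · intro hc
              funext j
              have := hc j.1 j.2
              rw [he, dif_pos j.2] at this
              exact this.symm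
            · rintro rfl i hiS
              rw [he, dif_pos hiS]
          calc ∑ u, (if ∀ i ∈ S, y i = e (u, v₀) i then p y else 0)
              = ∑ u, (if u = uy then p y else 0) := by
                refine Finset.sum_congr rfl fun u _ => ?_
                by_cases hc : u = uy
                · rw [if_pos ((key u).mpr hc), if_pos hc]
                · rw [if_neg fun hc' => hc ((key u).mp hc'), if_neg hc]
            _ = p y := by rw [Finset.sum_ite_eq' Finset.univ uy (fun _ => p y)]; simp
      _ = 1 := hp1
  have hst : ∀ u v, Pm p S (e (u, v)) = Pm p S (e (u, v₀)) :=
    fun u v => Pm_congr p (subset_refl S) (hagree u v)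
  have hmI : ∀ u v, Pm p I (e (u, v)) = Pm p I (e (u, v₀)) :=
    fun u v => Pm_congr p Finset.inter_subset_left (hagree u v)
  calc ∑ u, ∑ v, Pm p S (e (u, v)) * Pm p T (e (u, v)) / Pm p I (e (u, v))
      = ∑ u, (Pm p S (e (u, v₀)) / Pm p I (e (u, v₀)) * ∑ v, Pm p T (e (u, v))) := by
        refine Finset.sum_congr rfl fun u _ => ?_
        rw [Finset.mul_sum]
        refine Finset.sum_congr rfl fun v _ => ?_
        rw [hst u v, hmI u v, mul_div_right_comm]
    _ = ∑ u, (Pm p S (e (u, v₀)) / Pm p I (e (u, v₀)) * Pm p I (e (u, v₀))) := by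
        refine Finset.sum_congr rfl fun u _ => ?_
        rw [hC u]
    _ ≤ ∑ u, Pm p S (e (u, v₀)) := by
        refine Finset.sum_le_sum fun u _ => ?_
        by_cases hm : Pm p I (e (u, v₀)) = 0
        · rw [hm, mul_zero]; exact Pm_nonneg p hp0 _ _
        · rw [div_mul_cancel₀ _ hm]
    _ = 1 := hD

/-- Submodularity-type inequality for joint entropies. -/
lemma submod (p : (∀ i, X i) → ℝ) (hp0 : ∀ x, 0 ≤ p x) (hp1 : ∑ x, p x = 1)
    (S T : Finset (Fin n)) (hST : S ∪ T = Finset.univ) :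
    entropy p + entropy (subMarginal p (S ∩ T)) ≤
      entropy (subMarginal p S) + entropy (subMarginal p T) := by
  have hq := sum_q_le_one p hp0 hp1 S T hST
  have step : ∀ x : ∀ i, X i,
      p x * Real.log (Pm p S x) + p x * Real.log (Pm p T x)
        - (p x * Real.log (p x) + p x * Real.log (Pm p (S ∩ T) x))
      ≤ Pm p S x * Pm p T x / Pm p (S ∩ T) x - p x := by
    intro x
    rcases eq_or_lt_of_le (hp0 x) with h0 | hpos
    · rw [← h0]
      simp only [zero_mul, add_zero, sub_zero, zero_add, sub_self]
      exact div_nonneg (mul_nonneg (Pm_nonneg p hp0 S x) (Pm_nonneg p hp0 T x))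
        (Pm_nonneg p hp0 (S ∩ T) x)
    · have hpS : 0 < Pm p S x := lt_of_lt_of_le hpos (le_Pm p hp0 S x)
      have hpT : 0 < Pm p T x := lt_of_lt_of_le hpos (le_Pm p hp0 T x)
      have hpI : 0 < Pm p (S ∩ T) x := lt_of_lt_of_le hpos (le_Pm p hp0 (S ∩ T) x)
      set q : ℝ := Pm p S x * Pm p T x / Pm p (S ∩ T) x with hqdef
      have hq0 : 0 < q := div_pos (mul_pos hpS hpT) hpI
      have hlog : Real.log (q / p x) ≤ q / p x - 1 :=
        Real.log_le_sub_one_of_pos (div_pos hq0 hpos)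
      have hmul := mul_le_mul_of_nonneg_left hlog hpos.le
      have e1 : Real.log (q / p x)
          = Real.log (Pm p S x) + Real.log (Pm p T x) - Real.log (Pm p (S ∩ T) x)
            - Real.log (p x) := by
        rw [Real.log_div hq0.ne' hpos.ne', hqdef,
          Real.log_div (mul_pos hpS hpT).ne' hpI.ne', Real.log_mul hpS.ne' hpT.ne']
      have e2 : p x * (q / p x - 1) = q - p x := by
        rw [mul_sub, mul_one, mul_comm, div_mul_cancel₀ q hpos.ne']
      rw [e1, e2] at hmul
      calc p x * Real.log (Pm p S x) + p x * Real.log (Pm p T x)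
            - (p x * Real.log (p x) + p x * Real.log (Pm p (S ∩ T) x))
          = p x * (Real.log (Pm p S x) + Real.log (Pm p T x) - Real.log (Pm p (S ∩ T) x)
              - Real.log (p x)) := by ring
        _ ≤ q - p x := hmul
  have hsumstep := Finset.sum_le_sum fun x (_ : x ∈ Finset.univ) => step x
  rw [Finset.sum_sub_distrib, Finset.sum_sub_distrib, Finset.sum_add_distrib,
    Finset.sum_add_distrib, hp1] at hsumstep
  rw [entropy_subMarginal p S, entropy_subMarginal p T, entropy_subMarginal p (S ∩ T)]
  have hent : entropy p = -∑ x : ∀ i, X i, p x * Real.log (p x) := rfl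
  rw [hent]
  linarith [hsumstep, hq]

set_option maxHeartbeats 800000 in
/-- Han's inequality: `(n−1)` times the joint entropy is at most the sum of the
joint entropies of the leave-one-out collections. -/
theorem stmt_2 (n : ℕ) (hn : 2 ≤ n) (X : Fin n → Type*) [∀ i, Fintype (X i)]
    (p : (∀ i, X i) → ℝ) (hp0 : ∀ x, 0 ≤ p x) (hp1 : ∑ x, p x = 1) :
    ((n : ℝ) - 1) * entropy p ≤
      ∑ i : Fin n, entropy (subMarginal p ({i} : Finset (Fin n))ᶜ) := by
  have key : ∀ i : Fin n,
      entropy p + entropy (subMarginal p (Finset.Iio i)) ≤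
        entropy (subMarginal p ({i} : Finset (Fin n))ᶜ) + entropy (subMarginal p (Finset.Iic i)) := by
    intro i
    have hU : ({i} : Finset (Fin n))ᶜ ∪ Finset.Iic i = Finset.univ := by
      ext j
      simp only [Finset.mem_union, Finset.mem_compl, Finset.mem_singleton, Finset.mem_Iic,
        Finset.mem_univ, iff_true]
      by_cases hj : j = i
      · exact Or.inr (hj ▸ le_rfl)
      · exact Or.inl hj
    have hI : ({i} : Finset (Fin n))ᶜ ∩ Finset.Iic i = Finset.Iio i := by
      ext j
      simp only [Finset.mem_inter, Finset.mem_compl, Finset.mem_singleton, Finset.mem_Iic,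
        Finset.mem_Iio]
      constructor
      · rintro ⟨hne, hle⟩; exact lt_of_le_of_ne hle hne
      · intro hlt; exact ⟨ne_of_lt hlt, le_of_lt hlt⟩
    have h := submod p hp0 hp1 (({i} : Finset (Fin n))ᶜ) (Finset.Iic i) hU
    rwa [hI] at h
  have hsum := Finset.sum_le_sum fun i (_ : i ∈ Finset.univ) => key i
  rw [Finset.sum_add_distrib, Finset.sum_add_distrib, Finset.sum_const, Finset.card_univ,
    Fintype.card_fin, nsmul_eq_mul] at hsum
  have htel : ∑ i : Fin n, entropy (subMarginal p (Finset.Iic i))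
      - ∑ i : Fin n, entropy (subMarginal p (Finset.Iio i)) = entropy p := by
    set G : ℕ → ℝ := fun k =>
      entropy (subMarginal p (Finset.filter (fun j : Fin n => (j : ℕ) < k) Finset.univ)) with hG
    have h1 : ∀ i : Fin n, Finset.Iic i
        = Finset.filter (fun j : Fin n => (j : ℕ) < (i : ℕ) + 1) Finset.univ := by
      intro i; ext j
      simp only [Finset.mem_Iic, Finset.mem_filter, Finset.mem_univ, true_and]
      rw [Fin.le_def]; omega
    have h2 : ∀ i : Fin n, Finset.Iio i
        = Finset.filter (fun j : Fin n => (j : ℕ) < (i : ℕ)) Finset.univ := by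
      intro i; ext j
      simp only [Finset.mem_Iio, Finset.mem_filter, Finset.mem_univ, true_and]
      exact Fin.lt_def
    have hIic : ∀ i : Fin n, entropy (subMarginal p (Finset.Iic i)) = G ((i : ℕ) + 1) := by
      intro i; simp only [hG]; rw [h1 i]
    have hIio : ∀ i : Fin n, entropy (subMarginal p (Finset.Iio i)) = G ((i : ℕ)) := by
      intro i; simp only [hG]; rw [h2 i]
    have hun : Finset.filter (fun j : Fin n => (j : ℕ) < n) Finset.univ = Finset.univ := by
      ext j
      simp only [Finset.mem_filter, Finset.mem_univ, true_and, iff_true]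
      exact j.isLt
    have h0 : Finset.filter (fun j : Fin n => (j : ℕ) < 0) Finset.univ = ∅ := by
      ext j
      simp only [Finset.mem_filter, Finset.mem_univ, true_and, Finset.notMem_empty, iff_false]
      omega
    calc ∑ i : Fin n, entropy (subMarginal p (Finset.Iic i))
          - ∑ i : Fin n, entropy (subMarginal p (Finset.Iio i))
        = ∑ i : Fin n, (G ((i : ℕ) + 1) - G (i : ℕ)) := by
          rw [← Finset.sum_sub_distrib]
          exact Finset.sum_congr rfl fun i _ => by rw [hIic i, hIio i]
      _ = ∑ k ∈ Finset.range n, (G (k + 1) - G k) :=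
          Fin.sum_univ_eq_sum_range (fun k => G (k + 1) - G k) n
      _ = G n - G 0 := Finset.sum_range_sub G n
      _ = entropy p := by
          simp only [hG]
          rw [hun, h0, entropy_subMarginal_univ p, entropy_subMarginal_empty p hp1, sub_zero]
  linarith [hsum, htel]

end
end

section
/- Conditional version of Han's inequality used in the inductive step: for discrete random variables X_1,...,X_n (n ≥ 3) and any fixed index i, (n−2)·H(X_{1..n}) + H(X_i) ≤ Σ_{j ≠ i} H(X_{\{1,...,n\}∖\{j\}}), where all entropies are joint entropies of the indicated variable subsets. -/
noncomputable section

variable {n : ℕ} {X : Fin n → Type*} [∀ i, Fintype (X i)]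

set_option linter.unusedSectionVars false

namespace HanAux

open Finset Real

variable (p : (∀ i, X i) → ℝ)

/-- restriction of a full configuration to `S`. -/
def resF (S : Finset (Fin n)) (x : ∀ i, X i) : ∀ i : S, X i.1 := fun i => x i.1

/-- restriction between nested finsets. -/
def res {A S : Finset (Fin n)} (h : A ⊆ S) (y : ∀ i : S, X i.1) : ∀ i : A, X i.1 :=
  fun i => y ⟨i.1, h i.2⟩

lemma res_resF {A S : Finset (Fin n)} (h : A ⊆ S) (x : ∀ i, X i) :
    res h (resF S x) = resF A x := rfl

lemma subMarginal_nonneg (hp0 : ∀ x, 0 ≤ p x) (S : Finset (Fin n)) (z : ∀ i : S, X i.1) :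
    0 ≤ subMarginal p S z := by
  classical
  apply Finset.sum_nonneg
  intro x _
  split <;> simp [hp0]

/-- Key fiber lemma. -/
lemma fiber (S : Finset (Fin n)) (F : (∀ i : S, X i.1) → ℝ) :
    ∑ y : ∀ i : S, X i.1, subMarginal p S y * F y = ∑ x, p x * F (resF S x) := by
  classical
  unfold subMarginal
  have h1 : ∀ y : ∀ i : S, X i.1,
      (∑ x : ∀ j, X j, if ∀ i : S, x i.1 = y i then p x else 0) * F y
      = ∑ x : ∀ j, X j, if resF S x = y then p x * F y else 0 := by
    intro y
    rw [Finset.sum_mul]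
    apply Finset.sum_congr rfl
    intro x _
    have : (∀ i : S, x i.1 = y i) ↔ resF S x = y := by
      constructor
      · intro h; funext i; exact h i
      · intro h i; exact congrFun h i
    split_ifs with h1 h2 h2 <;> simp_all [this]
  rw [Finset.sum_congr rfl fun y _ => h1 y, Finset.sum_comm]
  apply Finset.sum_congr rfl
  intro x _
  simp


lemma sum_subMarginal (hp1 : ∑ x, p x = 1) (S : Finset (Fin n)) :
    ∑ y : ∀ i : S, X i.1, subMarginal p S y = 1 := by
  have := fiber p S (fun _ => 1)
  simpa [hp1] using this

lemma entropy_subMarginal (S : Finset (Fin n)) :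
    entropy (subMarginal p S) = -∑ x, p x * Real.log (subMarginal p S (resF S x)) := by
  rw [entropy, fiber p S (fun y => Real.log (subMarginal p S y))]

lemma subMarginal_mono {A S : Finset (Fin n)} (hp0 : ∀ x, 0 ≤ p x) (h : A ⊆ S)
    (y : ∀ i : S, X i.1) : subMarginal p S y ≤ subMarginal p A (res h y) := by
  classical
  apply Finset.sum_le_sum
  intro x _
  split_ifs with h1 h2
  · exact le_refl _
  · exact absurd (show ∀ i : A, x i.1 = res h y i from fun i => h1 ⟨i.1, h i.2⟩) h2
  all_goals simp [hp0]

lemma le_subMarginal (hp0 : ∀ x, 0 ≤ p x) (S : Finset (Fin n)) (x : ∀ i, X i) :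
    p x ≤ subMarginal p S (resF S x) := by
  classical
  have : p x = if ∀ i : S, x i.1 = resF S x i then p x else 0 := by simp [resF]
  rw [this]
  apply Finset.single_le_sum (f := fun w => if ∀ i : S, w i.1 = resF S x i then p w else 0)
  · intro w _; split <;> simp [hp0]
  · exact Finset.mem_univ x

lemma subMarginal_pos (hp0 : ∀ x, 0 ≤ p x) (S : Finset (Fin n)) {x : ∀ i, X i}
    (hx : 0 < p x) : 0 < subMarginal p S (resF S x) :=
  lt_of_lt_of_le hx (le_subMarginal p hp0 S x)


/-- extend a configuration on `B` by value `v` at `u`. -/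
def ext (u : Fin n) {B : Finset (Fin n)} (v : X u) (b : ∀ i : B, X i.1) :
    ∀ i : (insert u B : Finset (Fin n)), X i.1 :=
  fun i => if h : i.1 = u then cast (congrArg X h).symm v else
    b ⟨i.1, (Finset.mem_insert.mp i.2).resolve_left h⟩

lemma ext_apply_u {B : Finset (Fin n)} (u : Fin n) (v : X u) (b : ∀ i : B, X i.1)
    (h : u ∈ (insert u B : Finset (Fin n))) : ext u v b ⟨u, h⟩ = v := by
  simp [ext]

lemma ext_apply_ne {B : Finset (Fin n)} (u : Fin n) (v : X u) (b : ∀ i : B, X i.1)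
    (i : (insert u B : Finset (Fin n))) (h : i.1 ≠ u) :
    ext u v b i = b ⟨i.1, (Finset.mem_insert.mp i.2).resolve_left h⟩ := by
  simp [ext, h]

lemma res_ext {B : Finset (Fin n)} (u : Fin n) (hu : u ∉ B) (v : X u) (b : ∀ i : B, X i.1) :
    res (Finset.subset_insert u B) (ext u v b) = b := by
  funext i
  exact dif_neg fun (h : i.1 = u) => hu (h ▸ i.2)

lemma res_ext_insert {A B : Finset (Fin n)} (hAB : A ⊆ B) (u : Fin n) (hu : u ∉ B)
    (v : X u) (b : ∀ i : B, X i.1) :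
    res (Finset.insert_subset_insert u hAB) (ext u v b) = ext u v (res hAB b) := by
  funext i
  by_cases h : i.1 = u
  · simp only [res, ext, dif_pos h]
  · simp only [res, ext, dif_neg h]

lemma sum_ext {B : Finset (Fin n)} (u : Fin n) (hu : u ∉ B)
    (F : (∀ i : (insert u B : Finset (Fin n)), X i.1) → ℝ) :
    ∑ y, F y = ∑ v : X u, ∑ b : ∀ i : B, X i.1, F (ext u v b) := by
  have hbij : Function.Bijective (fun z : X u × (∀ i : B, X i.1) => ext u z.1 z.2) := by
    apply Function.bijective_iff_has_inverse.mpr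
    refine ⟨fun y => (y ⟨u, Finset.mem_insert_self u B⟩, res (Finset.subset_insert u B) y),
      ?_, ?_⟩
    · rintro ⟨v, b⟩
      simp only
      rw [ext_apply_u, res_ext u hu]
    · intro y
      funext i
      obtain ⟨iv, hi⟩ := i
      by_cases h : iv = u
      · subst h
        simp [ext]
      · exact dif_neg h
  rw [← Equiv.sum_comp (Equiv.ofBijective _ hbij) F, Fintype.sum_prod_type]
  rfl

lemma ext_cond {A : Finset (Fin n)} {u : Fin n} (hu : u ∉ A) (v : X u) (a : ∀ i : A, X i.1)
    (x : ∀ i, X i) :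
    (∀ i : (insert u A : Finset (Fin n)), x i.1 = ext u v a i) ↔
      (x u = v ∧ ∀ i : A, x i.1 = a i) := by
  constructor
  · intro h
    constructor
    · have := h ⟨u, Finset.mem_insert_self u A⟩
      rwa [ext_apply_u] at this
    · intro i
      have := h ⟨i.1, Finset.mem_insert_of_mem i.2⟩
      rwa [ext_apply_ne u v a _ (fun he => hu (he ▸ i.2))] at this
  · rintro ⟨h1, h2⟩ ⟨iv, hi⟩
    by_cases h : iv = u
    · subst h
      rw [ext_apply_u]
      exact h1
    · rw [ext_apply_ne u v a _ h]
      exact h2 ⟨iv, (Finset.mem_insert.mp hi).resolve_left h⟩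

lemma sum_subMarginal_ext {A : Finset (Fin n)} {u : Fin n} (hu : u ∉ A) (a : ∀ i : A, X i.1) :
    ∑ v : X u, subMarginal p (insert u A) (ext u v a) = subMarginal p A a := by
  classical
  unfold subMarginal
  rw [Finset.sum_comm]
  apply Finset.sum_congr rfl
  intro x _
  have h1 : ∀ v : X u, (if ∀ i : (insert u A : Finset (Fin n)), x i.1 = ext u v a i
      then p x else 0) = if x u = v ∧ ∀ i : A, x i.1 = a i then p x else 0 := by
    intro v
    simp only [ext_cond hu v a x]
  have h2 : ∀ v : X u, (if x u = v ∧ ∀ i : A, x i.1 = a i then p x else 0)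
      = if x u = v then (if ∀ i : A, x i.1 = a i then p x else 0) else 0 := by
    intro v
    by_cases h : x u = v <;> by_cases hC : (∀ i : A, x i.1 = a i) <;> simp [h, hC]
  rw [Finset.sum_congr rfl fun v _ => (h1 v).trans (h2 v),
    Finset.sum_ite_eq Finset.univ (x u)]
  simp


lemma jensen_log {ι : Type*} (s : Finset ι) (w t : ι → ℝ) (hw : ∀ i ∈ s, 0 ≤ w i)
    (hw1 : ∑ i ∈ s, w i = 1) (ht : ∀ i ∈ s, 0 < t i) :
    ∑ i ∈ s, w i * Real.log (t i) ≤ Real.log (∑ i ∈ s, w i * t i) := by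
  have := (strictConcaveOn_log_Ioi.concaveOn).le_map_sum hw hw1
    (fun i hi => Set.mem_Ioi.mpr (ht i hi))
  simpa [smul_eq_mul] using this


lemma submodular (hp0 : ∀ x, 0 ≤ p x) (hp1 : ∑ x, p x = 1)
    {A B : Finset (Fin n)} (hAB : A ⊆ B) {u : Fin n} (hu : u ∉ B) :
    entropy (subMarginal p (insert u B)) + entropy (subMarginal p A)
      ≤ entropy (subMarginal p (insert u A)) + entropy (subMarginal p B) := by
  classical
  have huA : u ∉ A := fun h => hu (hAB h)
  set s : Finset (∀ i, X i) := Finset.univ.filter (fun x => 0 < p x) with hs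
  have hps : ∀ x, x ∉ s → p x = 0 := by
    intro x hx
    simp only [hs, Finset.mem_filter, Finset.mem_univ, true_and, not_lt] at hx
    exact le_antisymm hx (hp0 x)
  have hsum1 : ∑ x ∈ s, p x = 1 := by
    rw [Finset.sum_subset (Finset.subset_univ s) (fun x _ hx => hps x hx)]
    exact hp1
  -- shorthand marginals
  set mA : (∀ i, X i) → ℝ := fun x => subMarginal p A (resF A x) with hmA
  set mB : (∀ i, X i) → ℝ := fun x => subMarginal p B (resF B x) with hmB
  set miA : (∀ i, X i) → ℝ := fun x => subMarginal p (insert u A) (resF (insert u A) x) with hmiA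
  set miB : (∀ i, X i) → ℝ := fun x => subMarginal p (insert u B) (resF (insert u B) x) with hmiB
  set t : (∀ i, X i) → ℝ := fun x => miA x * mB x / (mA x * miB x) with hT
  have hpos : ∀ x ∈ s, 0 < p x := by
    intro x hx; simp only [hs, Finset.mem_filter] at hx; exact hx.2
  have hmApos : ∀ x ∈ s, 0 < mA x := fun x hx => subMarginal_pos p hp0 A (hpos x hx)
  have hmBpos : ∀ x ∈ s, 0 < mB x := fun x hx => subMarginal_pos p hp0 B (hpos x hx)
  have hmiApos : ∀ x ∈ s, 0 < miA x := fun x hx => subMarginal_pos p hp0 _ (hpos x hx)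
  have hmiBpos : ∀ x ∈ s, 0 < miB x := fun x hx => subMarginal_pos p hp0 _ (hpos x hx)
  have htpos : ∀ x ∈ s, 0 < t x := fun x hx =>
    div_pos (mul_pos (hmiApos x hx) (hmBpos x hx)) (mul_pos (hmApos x hx) (hmiBpos x hx))
  have htnonneg : ∀ x, 0 ≤ t x := fun x =>
    div_nonneg (mul_nonneg (subMarginal_nonneg p hp0 _ _) (subMarginal_nonneg p hp0 _ _))
      (mul_nonneg (subMarginal_nonneg p hp0 _ _) (subMarginal_nonneg p hp0 _ _))
  -- the Q bound
  have hAiB : A ⊆ insert u B := hAB.trans (Finset.subset_insert u B)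
  have hQ : ∑ x ∈ s, p x * t x ≤ 1 := by
    have step1 : ∑ x ∈ s, p x * t x ≤ ∑ x, p x * t x := by
      apply Finset.sum_le_sum_of_subset_of_nonneg (Finset.subset_univ s)
      intro x _ _
      exact mul_nonneg (hp0 x) (htnonneg x)
    have step2 : ∑ x, p x * t x = ∑ y : ∀ i : (insert u B : Finset (Fin n)), X i.1,
        subMarginal p (insert u B) y *
          (subMarginal p (insert u A) (res (Finset.insert_subset_insert u hAB) y) *
            subMarginal p B (res (Finset.subset_insert u B) y) /
            (subMarginal p A (res hAiB y) * subMarginal p (insert u B) y)) := by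
      rw [fiber p (insert u B) (fun y =>
        subMarginal p (insert u A) (res (Finset.insert_subset_insert u hAB) y) *
          subMarginal p B (res (Finset.subset_insert u B) y) /
          (subMarginal p A (res hAiB y) * subMarginal p (insert u B) y))]
      apply Finset.sum_congr rfl
      intro x _
      rfl
    have step3 : ∑ y : ∀ i : (insert u B : Finset (Fin n)), X i.1,
        subMarginal p (insert u B) y *
          (subMarginal p (insert u A) (res (Finset.insert_subset_insert u hAB) y) *
            subMarginal p B (res (Finset.subset_insert u B) y) /
            (subMarginal p A (res hAiB y) * subMarginal p (insert u B) y))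
        ≤ ∑ y : ∀ i : (insert u B : Finset (Fin n)), X i.1,
          subMarginal p (insert u A) (res (Finset.insert_subset_insert u hAB) y) *
            subMarginal p B (res (Finset.subset_insert u B) y) /
            subMarginal p A (res hAiB y) := by
      apply Finset.sum_le_sum
      intro y _
      set a := subMarginal p (insert u B) y with ha
      set N := subMarginal p (insert u A) (res (Finset.insert_subset_insert u hAB) y) *
        subMarginal p B (res (Finset.subset_insert u B) y) with hN
      set d := subMarginal p A (res hAiB y) with hd
      have hNn : 0 ≤ N :=
        mul_nonneg (subMarginal_nonneg p hp0 _ _) (subMarginal_nonneg p hp0 _ _)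
      have hdn : 0 ≤ d := subMarginal_nonneg p hp0 _ _
      rcases eq_or_ne a 0 with h | h
      · rw [h, zero_mul]
        exact div_nonneg hNn hdn
      · rcases eq_or_ne d 0 with hd0 | hd0
        · simp [hd0]
        · rw [show a * (N / (d * a)) = N / d by field_simp]
    have step4 : ∑ y : ∀ i : (insert u B : Finset (Fin n)), X i.1,
        subMarginal p (insert u A) (res (Finset.insert_subset_insert u hAB) y) *
          subMarginal p B (res (Finset.subset_insert u B) y) /
          subMarginal p A (res hAiB y) ≤ 1 := by
      rw [sum_ext u hu]
      have inner : ∀ b : ∀ i : B, X i.1, ∀ v : X u,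
          subMarginal p (insert u A) (res (Finset.insert_subset_insert u hAB) (ext u v b)) *
            subMarginal p B (res (Finset.subset_insert u B) (ext u v b)) /
            subMarginal p A (res hAiB (ext u v b))
          = subMarginal p (insert u A) (ext u v (res hAB b)) *
            (subMarginal p B b / subMarginal p A (res hAB b)) := by
        intro b v
        rw [res_ext_insert hAB u hu, res_ext u hu]
        have : res hAiB (ext u v b) = res hAB b := by
          have h1 : res hAiB (ext u v b) = res hAB (res (Finset.subset_insert u B) (ext u v b)) := rfl
          rw [h1, res_ext u hu]
        rw [this, mul_div_assoc]
      calc ∑ v : X u, ∑ b : ∀ i : B, X i.1,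
            subMarginal p (insert u A) (res (Finset.insert_subset_insert u hAB) (ext u v b)) *
              subMarginal p B (res (Finset.subset_insert u B) (ext u v b)) /
              subMarginal p A (res hAiB (ext u v b))
          = ∑ b : ∀ i : B, X i.1, ∑ v : X u,
            subMarginal p (insert u A) (ext u v (res hAB b)) *
              (subMarginal p B b / subMarginal p A (res hAB b)) := by
            rw [Finset.sum_comm]
            exact Finset.sum_congr rfl fun b _ => Finset.sum_congr rfl fun v _ => inner b v
        _ = ∑ b : ∀ i : B, X i.1,
            subMarginal p A (res hAB b) * (subMarginal p B b / subMarginal p A (res hAB b)) := by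
            apply Finset.sum_congr rfl
            intro b _
            rw [← Finset.sum_mul, sum_subMarginal_ext p huA (res hAB b)]
        _ ≤ ∑ b : ∀ i : B, X i.1, subMarginal p B b := by
            apply Finset.sum_le_sum
            intro b _
            rcases eq_or_ne (subMarginal p A (res hAB b)) 0 with h | h
            · simp [h]
              exact subMarginal_nonneg p hp0 _ _
            · rw [mul_comm, div_mul_cancel₀ _ h]
        _ = 1 := sum_subMarginal p hp1 B
    linarith
  -- Jensen
  have hJ : ∑ x ∈ s, p x * Real.log (t x) ≤ 0 := by
    have h1 := jensen_log s p t (fun x hx => (hpos x hx).le) hsum1 htpos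
    have h2 : Real.log (∑ x ∈ s, p x * t x) ≤ 0 := by
      apply Real.log_nonpos _ hQ
      exact Finset.sum_nonneg fun x _ => mul_nonneg (hp0 x) (htnonneg x)
    linarith
  -- expand logs
  have hexp : ∑ x ∈ s, p x * Real.log (t x)
      = ∑ x ∈ s, (p x * Real.log (miA x) + p x * Real.log (mB x)
          - p x * Real.log (mA x) - p x * Real.log (miB x)) := by
    apply Finset.sum_congr rfl
    intro x hx
    rw [hT]
    rw [Real.log_div (mul_pos (hmiApos x hx) (hmBpos x hx)).ne'
        (mul_pos (hmApos x hx) (hmiBpos x hx)).ne',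
      Real.log_mul (hmiApos x hx).ne' (hmBpos x hx).ne',
      Real.log_mul (hmApos x hx).ne' (hmiBpos x hx).ne']
    ring
  -- convert to full sums and entropies
  have hfull : ∀ m : (∀ i, X i) → ℝ, ∑ x ∈ s, p x * Real.log (m x)
      = ∑ x, p x * Real.log (m x) := by
    intro m
    apply Finset.sum_subset (Finset.subset_univ s)
    intro x _ hx
    rw [hps x hx, zero_mul]
  have eA : entropy (subMarginal p A) = -∑ x ∈ s, p x * Real.log (mA x) := by
    rw [entropy_subMarginal, hfull]
  have eB : entropy (subMarginal p B) = -∑ x ∈ s, p x * Real.log (mB x) := by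
    rw [entropy_subMarginal, hfull]
  have eiA : entropy (subMarginal p (insert u A)) = -∑ x ∈ s, p x * Real.log (miA x) := by
    rw [entropy_subMarginal, hfull]
  have eiB : entropy (subMarginal p (insert u B)) = -∑ x ∈ s, p x * Real.log (miB x) := by
    rw [entropy_subMarginal, hfull]
  rw [eA, eB, eiA, eiB]
  rw [hexp] at hJ
  rw [Finset.sum_sub_distrib, Finset.sum_sub_distrib, Finset.sum_add_distrib] at hJ
  linarith


lemma entropy_comp {α β : Type*} [Fintype α] [Fintype β] (q : β → ℝ) (e : α → β)
    (he : Function.Bijective e) : entropy (fun a => q (e a)) = entropy q := by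
  unfold entropy
  rw [← Equiv.sum_comp (Equiv.ofBijective e he) (fun b => q b * Real.log (q b))]
  rfl

lemma subMarginal_univ (x : ∀ i, X i) :
    subMarginal p Finset.univ (resF Finset.univ x) = p x := by
  classical
  unfold subMarginal
  have : ∀ w : ∀ i, X i, (∀ i : (Finset.univ : Finset (Fin n)), w i.1 = resF Finset.univ x i)
      ↔ w = x := by
    intro w
    constructor
    · intro h; funext j; exact h ⟨j, Finset.mem_univ j⟩
    · intro h i; rw [h]; rfl
  rw [Finset.sum_congr rfl fun w _ => by rw [if_congr (this w) rfl rfl]]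
  simp

lemma entropy_eq_subMarginal_univ : entropy p = entropy (subMarginal p Finset.univ) := by
  have hbij : Function.Bijective (resF (X := X) Finset.univ) := by
    apply Function.bijective_iff_has_inverse.mpr
    refine ⟨fun y => fun j => y ⟨j, Finset.mem_univ j⟩, fun x => rfl, fun y => rfl⟩
  rw [← entropy_comp (subMarginal p Finset.univ) (resF Finset.univ) hbij]
  congr 1
  funext x
  rw [subMarginal_univ]

lemma subMarginal_singleton (i : Fin n) (y : ∀ j : ({i} : Finset (Fin n)), X j.1) :
    subMarginal p {i} y = marginal p i (y ⟨i, Finset.mem_singleton_self i⟩) := by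
  classical
  unfold subMarginal marginal
  apply Finset.sum_congr rfl
  intro x _
  have : (∀ j : ({i} : Finset (Fin n)), x j.1 = y j)
      ↔ x i = y ⟨i, Finset.mem_singleton_self i⟩ := by
    constructor
    · intro h; exact h ⟨i, Finset.mem_singleton_self i⟩
    · intro h j
      obtain ⟨jv, hj⟩ := j
      have hji : jv = i := Finset.mem_singleton.mp hj
      subst hji
      exact h
  rw [if_congr this rfl rfl]

lemma entropy_marginal_eq (i : Fin n) :
    entropy (marginal p i) = entropy (subMarginal p {i}) := by
  have hbij : Function.Bijective
      (fun y : ∀ j : ({i} : Finset (Fin n)), X j.1 => y ⟨i, Finset.mem_singleton_self i⟩) := by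
    apply Function.bijective_iff_has_inverse.mpr
    refine ⟨fun a => fun j => cast (congrArg X (Finset.mem_singleton.mp j.2)).symm a, ?_, ?_⟩
    · intro y
      funext j
      obtain ⟨jv, hj⟩ := j
      have hji : jv = i := Finset.mem_singleton.mp hj
      subst hji
      simp
    · intro a
      simp
  have := entropy_comp (marginal p i)
    (fun y : ∀ j : ({i} : Finset (Fin n)), X j.1 => y ⟨i, Finset.mem_singleton_self i⟩) hbij
  rw [← this]
  congr 1
  funext y
  rw [← subMarginal_singleton]

lemma telescope (hp0 : ∀ x, 0 ≤ p x) (hp1 : ∑ x, p x = 1) (i : Fin n)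
    (T : Finset (Fin n)) (hT : T ⊆ Finset.univ.erase i) :
    (T.card : ℝ) * entropy (subMarginal p Finset.univ) + entropy (subMarginal p {i})
      ≤ (∑ j ∈ T, entropy (subMarginal p (Finset.univ.erase j)))
        + entropy (subMarginal p (insert i T)) := by
  classical
  induction T using Finset.induction_on with
  | empty => simp; exact le_of_eq (by congr)
  | @insert j T hjT ih =>
    have hji : j ≠ i := Finset.ne_of_mem_erase (hT (Finset.mem_insert_self j T))
    have hT' : T ⊆ Finset.univ.erase i := (Finset.subset_insert j T).trans hT
    have ihh := ih hT'
    have hAB : insert i T ⊆ Finset.univ.erase j := by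
      rw [Finset.subset_erase]
      refine ⟨Finset.subset_univ _, ?_⟩
      intro hmem
      rcases Finset.mem_insert.mp hmem with h | h
      · exact hji h
      · exact hjT h
    have key := submodular p hp0 hp1 hAB (Finset.notMem_erase j Finset.univ)
    rw [Finset.insert_erase (Finset.mem_univ j)] at key
    rw [Finset.insert_comm] at key
    rw [Finset.sum_insert hjT, Finset.card_insert_of_notMem hjT]
    push_cast
    linarith

end HanAux

/-- Conditional version of Han's inequality used in the inductive step:
`(n−2)·H(X₁,...,Xₙ) + H(Xᵢ) ≤ ∑_{j ≠ i} H(X₋ⱼ)`. -/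
theorem stmt_8 (n : ℕ) (hn : 3 ≤ n) (X : Fin n → Type*) [∀ i, Fintype (X i)]
    (p : (∀ i, X i) → ℝ) (hp0 : ∀ x, 0 ≤ p x) (hp1 : ∑ x, p x = 1) (i : Fin n) :
    ((n : ℝ) - 2) * entropy p + entropy (marginal p i) ≤
      ∑ j ∈ Finset.univ.erase i, entropy (subMarginal p ({j} : Finset (Fin n))ᶜ) := by
  classical
  have htel := HanAux.telescope p hp0 hp1 i (Finset.univ.erase i) (le_refl _)
  rw [Finset.insert_erase (Finset.mem_univ i)] at htel
  have hcard : (Finset.univ.erase i).card = n - 1 := by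
    rw [Finset.card_erase_of_mem (Finset.mem_univ i), Finset.card_univ, Fintype.card_fin]
  rw [hcard] at htel
  have hsumeq : ∑ j ∈ Finset.univ.erase i, entropy (subMarginal p ({j} : Finset (Fin n))ᶜ)
      = ∑ j ∈ Finset.univ.erase i, entropy (subMarginal p (Finset.univ.erase j)) := by
    apply Finset.sum_congr rfl
    intro j _
    rw [Finset.compl_singleton]
  rw [hsumeq, HanAux.entropy_eq_subMarginal_univ p, HanAux.entropy_marginal_eq p i]
  have hn1 : ((n - 1 : ℕ) : ℝ) = (n : ℝ) - 1 := by
    have : 1 ≤ n := by omega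
    push_cast [this]
    ring
  rw [hn1] at htel
  linarith

end
end

section
/- Mixture bound on cumulative conditional total correlation over random orders: for discrete random variables X_1,...,X_n and a uniformly random permutation σ of {1,...,n} partitioned into K consecutive blocks A_1,...,A_K of equal size n/K (assuming K divides n), the expected sum over k of the conditional total correlations TC(X_{A_k} | X_{A_1 ∪ ... ∪ A_{k−1}}) is at most (1/K)·Σ_{i=1}^n H(X_i). -/
noncomputable section

variable {n : ℕ} {X : Fin n → Type*} [∀ i, Fintype (X i)]

open scoped Classical in
/-- The `k`-th block of the partition of the coordinates induced by the
permutation `σ` into `K` consecutive blocks of size `n / K`. -/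
def permBlock {n K : ℕ} (σ : Equiv.Perm (Fin n)) (k : Fin K) : Finset (Fin n) :=
  Finset.univ.filter (fun i => ((σ.symm i : ℕ) / (n / K)) = (k : ℕ))

open scoped Classical in
/-- The union of the blocks preceding the `k`-th block. -/
def permEarlier {n K : ℕ} (σ : Equiv.Perm (Fin n)) (k : Fin K) : Finset (Fin n) :=
  Finset.univ.filter (fun i => ((σ.symm i : ℕ) / (n / K)) < (k : ℕ))


namespace S17

open Finset
open scoped Classical

def rdist (p : (∀ i, X i) → ℝ) (C : Finset (Fin n)) (x : ∀ i, X i) : ℝ :=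
  subMarginal p C (fun j => x j.1)

def phi (p : (∀ i, X i) → ℝ) (C : Finset (Fin n)) : ℝ :=
  -∑ x, p x * Real.log (rdist p C x)

variable (p : (∀ i, X i) → ℝ)

lemma subMarginal_nonneg (hp0 : ∀ x, 0 ≤ p x) (C : Finset (Fin n)) (z : ∀ i : C, X i.1) :
    0 ≤ subMarginal p C z := by
  refine Finset.sum_nonneg fun x _ => ?_
  split <;> simp [hp0]

lemma transfer (C : Finset (Fin n)) (g : (∀ j : C, X j.1) → ℝ) :
    ∑ z, subMarginal p C z * g z = ∑ x, p x * g (fun j => x j.1) := by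
  unfold subMarginal
  simp only [Finset.sum_mul]
  rw [Finset.sum_comm]
  refine Finset.sum_congr rfl fun x _ => ?_
  rw [Finset.sum_eq_single (fun j => x j.1 : ∀ j : C, X j.1)]
  · simp
  · intro z _ hz
    rw [if_neg, zero_mul]
    intro h
    exact hz (funext fun j => (h j).symm)
  · simp

lemma sum_subMarginal (hp1 : ∑ x, p x = 1) (C : Finset (Fin n)) :
    ∑ z, subMarginal p C z = 1 := by
  have := transfer p C (fun _ => 1)
  simpa [hp1] using this

lemma rdist_nonneg (hp0 : ∀ x, 0 ≤ p x) (C : Finset (Fin n)) (x : ∀ i, X i) :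
    0 ≤ rdist p C x := subMarginal_nonneg p hp0 C _

lemma le_rdist (hp0 : ∀ x, 0 ≤ p x) (C : Finset (Fin n)) (x : ∀ i, X i) :
    p x ≤ rdist p C x := by
  unfold rdist subMarginal
  have h1 : p x = if ∀ i : C, x i.1 = (fun j : C => x j.1) i then p x else 0 := by simp
  rw [h1]
  refine Finset.single_le_sum (f := fun y : ∀ j, X j =>
    if ∀ i : C, y i.1 = (fun j : C => x j.1) i then p y else 0)
    (fun y _ => ?_) (Finset.mem_univ x)
  simp only []
  split <;> simp [hp0]

lemma rdist_mono (hp0 : ∀ x, 0 ≤ p x) {C D : Finset (Fin n)} (h : C ⊆ D) (x : ∀ i, X i) :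
    rdist p D x ≤ rdist p C x := by
  unfold rdist subMarginal
  refine Finset.sum_le_sum fun y _ => ?_
  by_cases hD : ∀ i : D, y i.1 = (fun j : D => x j.1) i
  · rw [if_pos hD, if_pos (show ∀ i : C, y i.1 = (fun j : C => x j.1) i from
      fun i => hD ⟨i.1, h i.2⟩)]
  · rw [if_neg hD]
    split <;> simp [hp0]

lemma phi_empty (hp1 : ∑ x, p x = 1) : phi p (∅ : Finset (Fin n)) = 0 := by
  unfold phi
  have : ∀ x : ∀ i, X i, rdist p ∅ x = 1 := by
    intro x
    unfold rdist subMarginal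
    rw [show (∑ y : ∀ j, X j, if ∀ i : (∅ : Finset (Fin n)), y i.1 = x i.1 then p y else 0)
        = ∑ y : ∀ j, X j, p y from Finset.sum_congr rfl fun y _ =>
          if_pos (fun i => absurd i.2 (Finset.notMem_empty _))]
    exact hp1
  simp [this]


def jmc {β : Type*} [Fintype β] (p : (∀ i, X i) → ℝ) (C : Finset (Fin n))
    (c : (∀ i, X i) → β) (z : ∀ j : C, X j.1) (b : β) : ℝ :=
  ∑ x : ∀ j, X j, if (∀ j : C, x j.1 = z j) ∧ c x = b then p x else 0

lemma jmc_nonneg {β : Type*} [Fintype β] (hp0 : ∀ x, 0 ≤ p x) (C : Finset (Fin n))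
    (c : (∀ i, X i) → β) (z : ∀ j : C, X j.1) (b : β) : 0 ≤ jmc p C c z b := by
  refine Finset.sum_nonneg fun x _ => ?_
  split <;> simp [hp0]

lemma jmc_le {β : Type*} [Fintype β] (hp0 : ∀ x, 0 ≤ p x) (C : Finset (Fin n))
    (c : (∀ i, X i) → β) (z : ∀ j : C, X j.1) (b : β) :
    jmc p C c z b ≤ subMarginal p C z := by
  refine Finset.sum_le_sum fun x _ => ?_
  by_cases h : (∀ j : C, x j.1 = z j) ∧ c x = b
  · rw [if_pos h, if_pos h.1]
  · rw [if_neg h]; split <;> simp [hp0]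

lemma transfer2 {β : Type*} [Fintype β] (C : Finset (Fin n))
    (c : (∀ i, X i) → β) (g : (∀ j : C, X j.1) → β → ℝ) :
    ∑ z, ∑ b, jmc p C c z b * g z b = ∑ x, p x * g (fun j => x j.1) (c x) := by
  unfold jmc
  have h1 : ∀ z : ∀ j : C, X j.1, ∀ b : β,
      (∑ x : ∀ j, X j, if (∀ j : C, x j.1 = z j) ∧ c x = b then p x else 0) * g z b
      = ∑ x : ∀ j, X j, (if (∀ j : C, x j.1 = z j) ∧ c x = b then p x * g z b else 0) := by
    intro z b
    rw [Finset.sum_mul]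
    refine Finset.sum_congr rfl fun x _ => ?_
    split <;> simp
  have h2 : (∑ z : ∀ j : C, X j.1, ∑ b : β, ∑ x : ∀ j, X j,
        (if (∀ j : C, x j.1 = z j) ∧ c x = b then p x * g z b else 0))
      = ∑ x : ∀ j, X j, ∑ z : ∀ j : C, X j.1, ∑ b : β,
        (if (∀ j : C, x j.1 = z j) ∧ c x = b then p x * g z b else 0) :=
    (Finset.sum_congr rfl fun z _ => Finset.sum_comm).trans Finset.sum_comm
  calc ∑ z : ∀ j : C, X j.1, ∑ b : β,
        (∑ x : ∀ j, X j, if (∀ j : C, x j.1 = z j) ∧ c x = b then p x else 0) * g z b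
      = ∑ x : ∀ j, X j, ∑ z : ∀ j : C, X j.1, ∑ b : β,
          (if (∀ j : C, x j.1 = z j) ∧ c x = b then p x * g z b else 0) := by
        rw [← h2]
        exact Finset.sum_congr rfl fun z _ => Finset.sum_congr rfl fun b _ => h1 z b
    _ = ∑ x, p x * g (fun j => x j.1) (c x) := by
        refine Finset.sum_congr rfl fun x _ => ?_
        rw [Finset.sum_eq_single (fun j => x j.1 : ∀ j : C, X j.1)]
        · rw [Finset.sum_eq_single (c x)]
          · simp
          · intro b _ hb; rw [if_neg]; rintro ⟨-, h2⟩; exact hb h2.symm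
          · simp
        · intro z _ hz
          refine Finset.sum_eq_zero fun b _ => ?_
          rw [if_neg]; rintro ⟨h1, -⟩; exact hz (funext fun j => (h1 j).symm)
        · simp

lemma crossTerm {q r : ℝ} (h0 : 0 ≤ r) (hrq : r ≤ q) :
    q * ((r / q) * Real.log (r / q)) = r * (Real.log r - Real.log q) := by
  rcases eq_or_ne q 0 with hq | hq
  · subst hq
    have : r = 0 := le_antisymm hrq h0
    simp [this]
  rcases eq_or_ne r 0 with hr | hr
  · simp [hr]
  rw [Real.log_div hr hq]
  field_simp

lemma gen_entropy {β : Type*} [Fintype β] (hp0 : ∀ x, 0 ≤ p x) (C : Finset (Fin n))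
    (c : (∀ i, X i) → β) :
    ∑ z, subMarginal p C z * entropy (fun b => jmc p C c z b / subMarginal p C z)
      = (-∑ x, p x * Real.log (jmc p C c (fun j => x j.1) (c x)))
        + ∑ x, p x * Real.log (rdist p C x) := by
  have key : ∀ z, subMarginal p C z * entropy (fun b => jmc p C c z b / subMarginal p C z)
      = ∑ b, jmc p C c z b * -(Real.log (jmc p C c z b) - Real.log (subMarginal p C z)) := by
    intro z
    unfold entropy
    rw [mul_neg, Finset.mul_sum, ← Finset.sum_neg_distrib]
    refine Finset.sum_congr rfl fun b _ => ?_
    have := crossTerm (jmc_nonneg p hp0 C c z b) (jmc_le p hp0 C c z b)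
    simp only []
    rw [this]
    ring
  calc ∑ z, subMarginal p C z * entropy (fun b => jmc p C c z b / subMarginal p C z)
      = ∑ z, ∑ b, jmc p C c z b *
          -(Real.log (jmc p C c z b) - Real.log (subMarginal p C z)) :=
        Finset.sum_congr rfl fun z _ => key z
    _ = ∑ x, p x * -(Real.log (jmc p C c (fun j => x j.1) (c x)) - Real.log (rdist p C x)) :=
        transfer2 p C c (fun z b => -(Real.log (jmc p C c z b) - Real.log (subMarginal p C z)))
    _ = _ := by
        rw [← Finset.sum_neg_distrib, ← Finset.sum_add_distrib]
        exact Finset.sum_congr rfl fun x _ => by ring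


lemma jmc_sum {β : Type*} [Fintype β] (C : Finset (Fin n)) (c : (∀ i, X i) → β)
    (z : ∀ j : C, X j.1) : ∑ b, jmc p C c z b = subMarginal p C z := by
  unfold jmc subMarginal
  rw [Finset.sum_comm]
  refine Finset.sum_congr rfl fun x _ => ?_
  rw [Finset.sum_eq_single (c x)]
  · by_cases h : ∀ j : C, x j.1 = z j
    · rw [if_pos ⟨h, rfl⟩, if_pos h]
    · rw [if_neg (fun hc => h hc.1), if_neg h]
  · intro b _ hb; exact if_neg (fun hc => hb hc.2.symm)
  · simp

lemma claimA (hp0 : ∀ x, 0 ≤ p x) (i : Fin n) (C : Finset (Fin n)) :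
    ∑ z, subMarginal p C z * entropy (marginal (condDist p C z) i)
      = phi p (insert i C) - phi p C := by
  have hmarg : ∀ z : ∀ j : C, X j.1,
      marginal (condDist p C z) i
        = fun a => jmc p C (fun x => x i) z a / subMarginal p C z := by
    intro z
    funext a
    unfold marginal condDist jmc
    rw [Finset.sum_div]
    refine Finset.sum_congr rfl fun x _ => ?_
    split_ifs <;> simp_all [zero_div]
  have hjmc : ∀ x : ∀ j, X j,
      jmc p C (fun y => y i) (fun j => x j.1) (x i) = rdist p (insert i C) x := by
    intro x
    unfold jmc rdist subMarginal
    refine Finset.sum_congr rfl fun y _ => ?_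
    refine if_congr ?_ rfl rfl
    constructor
    · rintro ⟨h1, h2⟩ j
      obtain ⟨jv, hjm⟩ := j
      rcases Finset.mem_insert.1 hjm with h | h
      · dsimp only at h ⊢
        subst h
        exact h2
      · exact h1 ⟨jv, h⟩
    · intro h
      exact ⟨fun j => h ⟨j.1, Finset.mem_insert_of_mem j.2⟩,
        h ⟨i, Finset.mem_insert_self i C⟩⟩
  calc ∑ z, subMarginal p C z * entropy (marginal (condDist p C z) i)
      = ∑ z, subMarginal p C z *
          entropy (fun a => jmc p C (fun x => x i) z a / subMarginal p C z) := by
        exact Finset.sum_congr rfl fun z _ => by rw [hmarg z]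
    _ = (-∑ x, p x * Real.log (jmc p C (fun y => y i) (fun j => x j.1) (x i)))
          + ∑ x, p x * Real.log (rdist p C x) := gen_entropy p hp0 C _
    _ = phi p (insert i C) - phi p C := by
        unfold phi
        rw [show (∑ x, p x * Real.log (jmc p C (fun y => y i) (fun j => x j.1) (x i)))
            = ∑ x, p x * Real.log (rdist p (insert i C) x) from
          Finset.sum_congr rfl fun x _ => by rw [hjmc x]]
        ring

lemma claimB (hp0 : ∀ x, 0 ≤ p x) (S C : Finset (Fin n)) :
    ∑ z, subMarginal p C z * entropy (subMarginal (condDist p C z) S)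
      = phi p (S ∪ C) - phi p C := by
  have hmarg : ∀ z : ∀ j : C, X j.1,
      subMarginal (condDist p C z) S
        = fun y => jmc p C (fun x (j : S) => x j.1) z y / subMarginal p C z := by
    intro z
    funext y
    unfold subMarginal condDist jmc
    rw [Finset.sum_div]
    refine Finset.sum_congr rfl fun x _ => ?_
    split_ifs <;> simp_all [subMarginal, funext_iff, zero_div]
  have hjmc : ∀ x : ∀ j, X j,
      jmc p C (fun y (j : S) => y j.1) (fun j => x j.1) (fun j => x j.1)
        = rdist p (S ∪ C) x := by
    intro x
    unfold jmc rdist subMarginal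
    refine Finset.sum_congr rfl fun y _ => ?_
    have fwd : ((∀ j : C, y j.1 = x j.1) ∧ (fun j : S => y j.1) = (fun j : S => x j.1)) →
        ∀ j : (S ∪ C : Finset (Fin n)), y j.1 = x j.1 := by
      rintro ⟨h1, h2⟩ j
      rcases Finset.mem_union.1 j.2 with h | h
      · exact congrFun h2 ⟨j.1, h⟩
      · exact h1 ⟨j.1, h⟩
    have bwd : (∀ j : (S ∪ C : Finset (Fin n)), y j.1 = x j.1) →
        ((∀ j : C, y j.1 = x j.1) ∧ (fun j : S => y j.1) = (fun j : S => x j.1)) :=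
      fun h => ⟨fun j => h ⟨j.1, Finset.mem_union_right S j.2⟩,
        funext fun j => h ⟨j.1, Finset.mem_union_left C j.2⟩⟩
    by_cases h : (∀ j : C, y j.1 = x j.1) ∧ (fun j : S => y j.1) = (fun j : S => x j.1)
    · rw [if_pos h, if_pos (fwd h)]
    · rw [if_neg h, if_neg (fun hh => h (bwd hh))]
  calc ∑ z, subMarginal p C z * entropy (subMarginal (condDist p C z) S)
      = ∑ z, subMarginal p C z *
          entropy (fun y => jmc p C (fun x (j : S) => x j.1) z y / subMarginal p C z) := by
        exact Finset.sum_congr rfl fun z _ => by rw [hmarg z]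
    _ = (-∑ x, p x * Real.log
            (jmc p C (fun y (j : S) => y j.1) (fun j => x j.1) (fun j => x j.1)))
          + ∑ x, p x * Real.log (rdist p C x) := gen_entropy p hp0 C _
    _ = phi p (S ∪ C) - phi p C := by
        unfold phi
        rw [show (∑ x, p x * Real.log
            (jmc p C (fun y (j : S) => y j.1) (fun j => x j.1) (fun j => x j.1)))
            = ∑ x, p x * Real.log (rdist p (S ∪ C) x) from
          Finset.sum_congr rfl fun x _ => by rw [hjmc x]]
        ring

lemma expCondTC_eq (hp0 : ∀ x, 0 ≤ p x) (S C : Finset (Fin n)) :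
    expCondTC p S C
      = (∑ i ∈ S, (phi p (insert i C) - phi p C)) - (phi p (S ∪ C) - phi p C) := by
  unfold expCondTC TCsub
  calc ∑ z, subMarginal p C z * ((∑ i ∈ S, entropy (marginal (condDist p C z) i))
          - entropy (subMarginal (condDist p C z) S))
      = ∑ z, ((∑ i ∈ S, subMarginal p C z * entropy (marginal (condDist p C z) i))
          - subMarginal p C z * entropy (subMarginal (condDist p C z) S)) := by
        refine Finset.sum_congr rfl fun z _ => ?_
        rw [mul_sub, Finset.mul_sum]
    _ = (∑ z, ∑ i ∈ S, subMarginal p C z * entropy (marginal (condDist p C z) i))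
          - ∑ z, subMarginal p C z * entropy (subMarginal (condDist p C z) S) :=
        Finset.sum_sub_distrib _ _
    _ = (∑ i ∈ S, ∑ z, subMarginal p C z * entropy (marginal (condDist p C z) i))
          - ∑ z, subMarginal p C z * entropy (subMarginal (condDist p C z) S) := by
        rw [Finset.sum_comm]
    _ = _ := by
        rw [claimB p hp0 S C]
        congr 1
        exact Finset.sum_congr rfl fun i _ => claimA p hp0 i C

lemma delta_nonneg (hp0 : ∀ x, 0 ≤ p x) (i : Fin n) (C : Finset (Fin n)) :
    0 ≤ phi p (insert i C) - phi p C := by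
  have : phi p (insert i C) - phi p C
      = ∑ x, (p x * Real.log (rdist p C x) - p x * Real.log (rdist p (insert i C) x)) := by
    unfold phi
    rw [Finset.sum_sub_distrib]
    ring
  rw [this]
  refine Finset.sum_nonneg fun x _ => ?_
  rcases eq_or_lt_of_le (hp0 x) with hp | hp
  · simp [← hp]
  · have h1 : 0 < rdist p (insert i C) x := lt_of_lt_of_le hp (le_rdist p hp0 _ x)
    have h2 : rdist p (insert i C) x ≤ rdist p C x :=
      rdist_mono p hp0 (Finset.subset_insert i C) x
    have := Real.log_le_log h1 h2
    nlinarith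

def glue (i : Fin n) (D : Finset (Fin n)) (u : ∀ j : D, X j.1) (a : X i) :
    ∀ j : (insert i D : Finset (Fin n)), X j.1 :=
  fun j => if h : (j : Fin n) = i then cast (congrArg X h).symm a
  else u ⟨j.1, (Finset.mem_insert.1 j.2).resolve_left h⟩

lemma glue_apply_i {i : Fin n} {D : Finset (Fin n)} (u : ∀ j : D, X j.1) (a : X i)
    (hm : i ∈ (insert i D : Finset (Fin n))) : glue i D u a ⟨i, hm⟩ = a := by
  unfold glue
  rw [dif_pos rfl]
  exact eq_of_heq (cast_heq _ a)

lemma glue_apply_mem {i : Fin n} {D : Finset (Fin n)} (hiD : i ∉ D) (u : ∀ j : D, X j.1)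
    (a : X i) (j : (insert i D : Finset (Fin n))) (hj : (j : Fin n) ∈ D) :
    glue i D u a j = u ⟨j.1, hj⟩ := by
  unfold glue
  rw [dif_neg (fun h : (j : Fin n) = i => hiD (h ▸ hj))]

lemma glue_bijective {i : Fin n} {D : Finset (Fin n)} (hiD : i ∉ D) :
    Function.Bijective (fun ua : (∀ j : D, X j.1) × X i => glue i D ua.1 ua.2) := by
  constructor
  · rintro ⟨u, a⟩ ⟨v, b⟩ h
    replace h : glue i D u a = glue i D v b := h
    have h1 : a = b := by
      have := congrFun h ⟨i, Finset.mem_insert_self i D⟩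
      rwa [glue_apply_i, glue_apply_i] at this
    have h2 : u = v := funext fun j => by
      have := congrFun h ⟨j.1, Finset.mem_insert_of_mem j.2⟩
      rwa [glue_apply_mem hiD _ _ _ j.2, glue_apply_mem hiD _ _ _ j.2] at this
    rw [h1, h2]
  · intro w
    refine ⟨⟨fun j => w ⟨j.1, Finset.mem_insert_of_mem j.2⟩,
      w ⟨i, Finset.mem_insert_self i D⟩⟩, ?_⟩
    funext j
    show glue i D _ _ j = w j
    by_cases hj : (j : Fin n) = i
    · obtain ⟨jv, hjm⟩ := j
      dsimp only at hj
      subst hj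
      exact glue_apply_i _ _ _
    · rw [glue_apply_mem hiD _ _ _ ((Finset.mem_insert.1 j.2).resolve_left hj)]


lemma key_sum (hp0 : ∀ x, 0 ≤ p x) (hp1 : ∑ x, p x = 1) (i : Fin n)
    {C D : Finset (Fin n)} (hCD : C ⊆ D) (hiD : i ∉ D) :
    ∑ x, p x * (rdist p D x * rdist p (insert i C) x
      / (rdist p (insert i D) x * rdist p C x)) ≤ 1 := by
  have hDE : D ⊆ insert i D := Finset.subset_insert i D
  have hCE : C ⊆ insert i D := hCD.trans hDE
  have hiCE : insert i C ⊆ insert i D := Finset.insert_subset_insert i hCD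
  calc ∑ x, p x * (rdist p D x * rdist p (insert i C) x
        / (rdist p (insert i D) x * rdist p C x))
      = ∑ w : ∀ j : (insert i D : Finset (Fin n)), X j.1, subMarginal p (insert i D) w *
          (subMarginal p D (fun j => w ⟨j.1, hDE j.2⟩)
            * subMarginal p (insert i C) (fun j => w ⟨j.1, hiCE j.2⟩)
          / (subMarginal p (insert i D) w * subMarginal p C (fun j => w ⟨j.1, hCE j.2⟩))) :=
        (transfer p (insert i D) (fun w => subMarginal p D (fun j => w ⟨j.1, hDE j.2⟩)
            * subMarginal p (insert i C) (fun j => w ⟨j.1, hiCE j.2⟩)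
          / (subMarginal p (insert i D) w
            * subMarginal p C (fun j => w ⟨j.1, hCE j.2⟩)))).symm
    _ ≤ ∑ w : ∀ j : (insert i D : Finset (Fin n)), X j.1,
          subMarginal p D (fun j => w ⟨j.1, hDE j.2⟩)
            * subMarginal p (insert i C) (fun j => w ⟨j.1, hiCE j.2⟩)
            / subMarginal p C (fun j => w ⟨j.1, hCE j.2⟩) := by
        refine Finset.sum_le_sum fun w _ => ?_
        rcases eq_or_ne (subMarginal p (insert i D) w) 0 with hq | hq
        · rw [hq, zero_mul]
          exact div_nonneg (mul_nonneg (subMarginal_nonneg p hp0 _ _)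
            (subMarginal_nonneg p hp0 _ _)) (subMarginal_nonneg p hp0 _ _)
        · rw [← mul_div_assoc, mul_div_mul_left _ _ hq]
    _ = ∑ ua : (∀ j : D, X j.1) × X i,
          subMarginal p D (fun j => glue i D ua.1 ua.2 ⟨j.1, hDE j.2⟩)
            * subMarginal p (insert i C) (fun j => glue i D ua.1 ua.2 ⟨j.1, hiCE j.2⟩)
            / subMarginal p C (fun j => glue i D ua.1 ua.2 ⟨j.1, hCE j.2⟩) :=
        (Fintype.sum_bijective _ (glue_bijective hiD) _ _ (fun ua => rfl)).symm
    _ = ∑ u : ∀ j : D, X j.1, ∑ a : X i,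
          subMarginal p D u * jmc p C (fun x => x i) (fun j : C => u ⟨j.1, hCD j.2⟩) a
            / subMarginal p C (fun j : C => u ⟨j.1, hCD j.2⟩) := by
        rw [Fintype.sum_prod_type]
        refine Finset.sum_congr rfl fun u _ => Finset.sum_congr rfl fun a _ => ?_
        have hres1 : (fun j : D => glue i D u a ⟨j.1, hDE j.2⟩) = u :=
          funext fun j => glue_apply_mem hiD u a _ j.2
        have hres2 : (fun j : C => glue i D u a ⟨j.1, hCE j.2⟩)
            = (fun j : C => u ⟨j.1, hCD j.2⟩) :=
          funext fun j => glue_apply_mem hiD u a _ (hCD j.2)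
        have hres3 : subMarginal p (insert i C) (fun j => glue i D u a ⟨j.1, hiCE j.2⟩)
            = jmc p C (fun x => x i) (fun j : C => u ⟨j.1, hCD j.2⟩) a := by
          unfold subMarginal jmc
          refine Finset.sum_congr rfl fun y _ => ?_
          by_cases h : (∀ j : C, y j.1 = u ⟨j.1, hCD j.2⟩) ∧ y i = a
          · rw [if_pos h, if_pos ?_]
            intro j
            obtain ⟨jv, hjm⟩ := j
            rcases Finset.mem_insert.1 hjm with hh | hh
            · dsimp only at hh ⊢
              subst hh
              rw [glue_apply_i]
              exact h.2
            · dsimp only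
              rw [glue_apply_mem hiD u a _ (hCD hh)]
              exact h.1 ⟨jv, hh⟩
          · rw [if_neg h, if_neg ?_]
            intro hall
            refine h ⟨fun j => ?_, ?_⟩
            · have := hall ⟨j.1, Finset.mem_insert_of_mem j.2⟩
              dsimp only at this
              rwa [glue_apply_mem hiD u a _ (hCD j.2)] at this
            · have := hall ⟨i, Finset.mem_insert_self i C⟩
              dsimp only at this
              rwa [glue_apply_i] at this
        rw [hres1, hres2, hres3]
    _ = ∑ u : ∀ j : D, X j.1,
          subMarginal p D u * subMarginal p C (fun j : C => u ⟨j.1, hCD j.2⟩)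
            / subMarginal p C (fun j : C => u ⟨j.1, hCD j.2⟩) := by
        refine Finset.sum_congr rfl fun u _ => ?_
        rw [← Finset.sum_div, ← Finset.mul_sum, jmc_sum]
    _ ≤ ∑ u : ∀ j : D, X j.1, subMarginal p D u := by
        refine Finset.sum_le_sum fun u _ => ?_
        rcases eq_or_ne (subMarginal p C (fun j : C => u ⟨j.1, hCD j.2⟩)) 0 with hq | hq
        · rw [hq, mul_zero, zero_div]
          exact subMarginal_nonneg p hp0 _ _
        · rw [mul_div_cancel_right₀ _ hq]
    _ = 1 := sum_subMarginal p hp1 D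

lemma delta_antitone (hp0 : ∀ x, 0 ≤ p x) (hp1 : ∑ x, p x = 1) (i : Fin n)
    {C D : Finset (Fin n)} (hCD : C ⊆ D) :
    phi p (insert i D) - phi p D ≤ phi p (insert i C) - phi p C := by
  by_cases hiD : i ∈ D
  · rw [Finset.insert_eq_self.mpr hiD, sub_self]
    exact delta_nonneg p hp0 i C
  · rw [← sub_nonneg]
    have expand : (phi p (insert i C) - phi p C) - (phi p (insert i D) - phi p D)
        = ∑ x, (p x * Real.log (rdist p (insert i D) x) + p x * Real.log (rdist p C x)
            - p x * Real.log (rdist p D x) - p x * Real.log (rdist p (insert i C) x)) := by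
      unfold phi
      rw [Finset.sum_sub_distrib, Finset.sum_sub_distrib, Finset.sum_add_distrib]
      ring
    rw [expand]
    have key := key_sum p hp0 hp1 i hCD hiD
    have pt : ∀ x : ∀ j, X j, p x - p x * (rdist p D x * rdist p (insert i C) x
          / (rdist p (insert i D) x * rdist p C x))
        ≤ p x * Real.log (rdist p (insert i D) x) + p x * Real.log (rdist p C x)
          - p x * Real.log (rdist p D x) - p x * Real.log (rdist p (insert i C) x) := by
      intro x
      rcases eq_or_lt_of_le (hp0 x) with hp | hp
      · rw [← hp]; simp
      · have h1 : 0 < rdist p D x := lt_of_lt_of_le hp (le_rdist p hp0 _ x)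
        have h2 : 0 < rdist p (insert i C) x := lt_of_lt_of_le hp (le_rdist p hp0 _ x)
        have h3 : 0 < rdist p (insert i D) x := lt_of_lt_of_le hp (le_rdist p hp0 _ x)
        have h4 : 0 < rdist p C x := lt_of_lt_of_le hp (le_rdist p hp0 _ x)
        have hrpos : 0 < rdist p D x * rdist p (insert i C) x
            / (rdist p (insert i D) x * rdist p C x) :=
          div_pos (mul_pos h1 h2) (mul_pos h3 h4)
        have hlog := Real.log_le_sub_one_of_pos hrpos
        have hlogr : Real.log (rdist p D x * rdist p (insert i C) x
              / (rdist p (insert i D) x * rdist p C x))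
            = Real.log (rdist p D x) + Real.log (rdist p (insert i C) x)
              - Real.log (rdist p (insert i D) x) - Real.log (rdist p C x) := by
          rw [Real.log_div (mul_pos h1 h2).ne' (mul_pos h3 h4).ne', Real.log_mul h1.ne' h2.ne',
            Real.log_mul h3.ne' h4.ne']
          ring
        rw [hlogr] at hlog
        nlinarith [hp.le, hlog]
    calc (0:ℝ) = 1 - 1 := by ring
      _ ≤ (∑ x, p x) - ∑ x, p x * (rdist p D x * rdist p (insert i C) x
            / (rdist p (insert i D) x * rdist p C x)) := by
          rw [hp1]; linarith
      _ = ∑ x, (p x - p x * (rdist p D x * rdist p (insert i C) x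
            / (rdist p (insert i D) x * rdist p C x))) := (Finset.sum_sub_distrib _ _).symm
      _ ≤ _ := Finset.sum_le_sum fun x _ => pt x


def del (p : (∀ i, X i) → ℝ) (i : Fin n) (C : Finset (Fin n)) : ℝ :=
  phi p (insert i C) - phi p C

open scoped Classical in
def PrS (σ : Equiv.Perm (Fin n)) (j : ℕ) : Finset (Fin n) :=
  Finset.univ.filter (fun a => (σ.symm a : ℕ) < j)

open scoped Classical in
def Ediv (m : ℕ) (σ : Equiv.Perm (Fin n)) (j : ℕ) : Finset (Fin n) :=
  Finset.univ.filter (fun a => (σ.symm a : ℕ) / m < j)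

lemma PrS_zero (σ : Equiv.Perm (Fin n)) : PrS σ 0 = ∅ := by
  simp [PrS]

lemma PrS_univ (σ : Equiv.Perm (Fin n)) : PrS σ n = Finset.univ := by
  simp only [PrS]
  refine Finset.filter_true_of_mem fun a _ => (σ.symm a).isLt

lemma PrS_succ (σ : Equiv.Perm (Fin n)) (j : Fin n) :
    PrS σ ((j : ℕ) + 1) = insert (σ j) (PrS σ (j : ℕ)) := by
  ext a
  simp only [PrS, Finset.mem_filter, Finset.mem_univ, true_and, Finset.mem_insert]
  constructor
  · intro h
    by_cases hlt : (σ.symm a : ℕ) < (j : ℕ)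
    · exact Or.inr hlt
    · left
      have hval : (σ.symm a : ℕ) = (j : ℕ) := by omega
      have : σ.symm a = j := Fin.ext hval
      rw [← this, Equiv.apply_symm_apply]
  · rintro (h | h)
    · subst h
      rw [Equiv.symm_apply_apply]
      omega
    · omega

lemma PrS_mono (σ : Equiv.Perm (Fin n)) {j k : ℕ} (h : j ≤ k) : PrS σ j ⊆ PrS σ k := by
  intro a ha
  simp only [PrS, Finset.mem_filter, Finset.mem_univ, true_and] at ha ⊢
  omega

lemma Ediv_zero (m : ℕ) (σ : Equiv.Perm (Fin n)) : Ediv m σ 0 = ∅ := by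
  simp [Ediv]

lemma Ediv_eq_PrS {m : ℕ} (hm : 0 < m) (σ : Equiv.Perm (Fin n)) (q : ℕ) :
    Ediv m σ q = PrS σ (m * q) := by
  ext a
  simp only [Ediv, PrS, Finset.mem_filter, Finset.mem_univ, true_and]
  rw [Nat.div_lt_iff_lt_mul hm, mul_comm]

lemma chain_rule (p : (∀ i, X i) → ℝ) (hp1 : ∑ x, p x = 1) (σ : Equiv.Perm (Fin n)) :
    phi p Finset.univ = ∑ i : Fin n, del p i (PrS σ (σ.symm i : ℕ)) := by
  have tele : ∑ j ∈ Finset.range n, (phi p (PrS σ (j + 1)) - phi p (PrS σ j))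
      = phi p Finset.univ := by
    rw [Finset.sum_range_sub (fun j => phi p (PrS σ j)) n, PrS_univ, PrS_zero,
      phi_empty p hp1, sub_zero]
  rw [← tele, ← Fin.sum_univ_eq_sum_range (fun j => phi p (PrS σ (j + 1)) - phi p (PrS σ j)) n]
  rw [← Equiv.sum_comp σ (fun i => del p i (PrS σ (σ.symm i : ℕ)))]
  refine Finset.sum_congr rfl fun j _ => ?_
  rw [Equiv.symm_apply_apply]
  unfold del
  rw [PrS_succ σ j]

lemma block_union {K : ℕ} (σ : Equiv.Perm (Fin n)) (k : Fin K) :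
    permBlock σ k ∪ permEarlier σ k = Ediv (n / K) σ ((k : ℕ) + 1) := by
  ext a
  simp only [permBlock, permEarlier, Ediv, Finset.mem_union, Finset.mem_filter,
    Finset.mem_univ, true_and]
  omega

lemma permEarlier_eq {K : ℕ} (σ : Equiv.Perm (Fin n)) (k : Fin K) :
    permEarlier σ k = Ediv (n / K) σ (k : ℕ) := rfl

lemma Ediv_top {K : ℕ} (hK : 0 < K) (hdvd : K ∣ n) (σ : Equiv.Perm (Fin n)) :
    Ediv (n / K) σ K = Finset.univ := by
  ext a
  simp only [Ediv, Finset.mem_filter, Finset.mem_univ, true_and, iff_true]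
  have hn : 0 < n := a.pos
  have hm : 0 < n / K := Nat.div_pos (Nat.le_of_dvd hn hdvd) hK
  rw [Nat.div_lt_iff_lt_mul hm]
  calc (σ.symm a : ℕ) < n := (σ.symm a).isLt
    _ = K * (n / K) := (Nat.mul_div_cancel' hdvd).symm

lemma fiber_sum {K : ℕ} (f : Fin n → ℝ) (d : Fin n → ℕ) (hd : ∀ i, d i < K) :
    ∑ k : Fin K, ∑ i ∈ Finset.univ.filter (fun i => d i = (k : ℕ)), f i = ∑ i, f i := by
  have h1 : ∀ k : Fin K, ∑ i ∈ Finset.univ.filter (fun i => d i = (k : ℕ)), f i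
      = ∑ i : Fin n, if d i = (k : ℕ) then f i else 0 := fun k => by
    rw [Finset.sum_filter]
  calc ∑ k : Fin K, ∑ i ∈ Finset.univ.filter (fun i => d i = (k : ℕ)), f i
      = ∑ k : Fin K, ∑ i : Fin n, if d i = (k : ℕ) then f i else 0 :=
        Finset.sum_congr rfl fun k _ => h1 k
    _ = ∑ i : Fin n, ∑ k : Fin K, if d i = (k : ℕ) then f i else 0 := Finset.sum_comm
    _ = ∑ i, f i := by
        refine Finset.sum_congr rfl fun i _ => ?_
        rw [Fin.sum_univ_eq_sum_range (fun j => if d i = j then f i else 0) K]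
        rw [Finset.sum_eq_single (d i)]
        · rw [if_pos rfl]
        · intro b _ hb; exact if_neg (fun hc => hb hc.symm)
        · intro hmem; exact absurd (Finset.mem_range.2 (hd i)) hmem

def ctf (t : Fin n) (j : Fin n) : Fin n :=
  if (j : ℕ) < (t : ℕ) then j
  else if (j : ℕ) = (t : ℕ) then ⟨n - 1, Nat.sub_lt t.pos Nat.one_pos⟩
  else ⟨(j : ℕ) - 1, lt_of_le_of_lt (Nat.sub_le _ _) j.isLt⟩

lemma ctf_injective (t : Fin n) : Function.Injective (ctf t) := by
  intro a b h
  have ha := a.isLt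
  have hb := b.isLt
  have ht := t.isLt
  have hval : (ctf t a : ℕ) = (ctf t b : ℕ) := congrArg Fin.val h
  unfold ctf at hval
  apply Fin.ext
  split_ifs at hval <;> (try simp only [Fin.val_mk] at hval) <;> omega

def ct (t : Fin n) : Equiv.Perm (Fin n) :=
  Equiv.ofBijective (ctf t)
    ((Fintype.bijective_iff_injective_and_card _).2 ⟨ctf_injective t, rfl⟩)

lemma ct_val (t x : Fin n) : ((ct t x : Fin n) : ℕ)
    = if (x : ℕ) < (t : ℕ) then (x : ℕ)
      else if (x : ℕ) = (t : ℕ) then n - 1 else (x : ℕ) - 1 := by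
  show ((ctf t x : Fin n) : ℕ) = _
  unfold ctf
  split_ifs <;> rfl

lemma ct_self (t : Fin n) : ((ct t t : Fin n) : ℕ) = n - 1 := by
  rw [ct_val]
  simp

lemma PrS_ct (τ : Equiv.Perm (Fin n)) (t : Fin n) (j : ℕ) (hj : j ≤ (t : ℕ)) :
    PrS (τ * ct t) j = PrS τ j := by
  ext a
  simp only [PrS, Finset.mem_filter, Finset.mem_univ, true_and]
  have hsymm : (τ * ct t).symm a = (ct t).symm (τ.symm a) := rfl
  rw [hsymm]
  set b := τ.symm a with hb
  set c := (ct t).symm b with hc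
  have hbc : ct t c = b := by rw [hc]; exact Equiv.apply_symm_apply _ b
  have hv := ct_val t c
  rw [hbc] at hv
  have ht := t.isLt
  split_ifs at hv <;> omega

lemma grp (D : ℕ → ℝ) (m : ℕ) (hm : 0 < m) :
    ∀ K : ℕ, ∑ t ∈ Finset.range (m * K), D (t / m) = ∑ q ∈ Finset.range K, m * D q := by
  intro K
  induction K with
  | zero => simp
  | succ K ih =>
    have hmul : m * (K + 1) = m * K + m := Nat.mul_succ m K
    rw [hmul, Finset.range_eq_Ico,
      ← Finset.sum_Ico_consecutive _ (Nat.zero_le (m * K)) (Nat.le_add_right (m * K) m),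
      ← Finset.range_eq_Ico, ih, Finset.sum_range_succ]
    congr 1
    have hconst : ∀ t ∈ Finset.Ico (m * K) (m * K + m), D (t / m) = D K := by
      intro t ht
      have h := Finset.mem_Ico.1 ht
      have hlo : K ≤ t / m := (Nat.le_div_iff_mul_le hm).2 (by rw [mul_comm]; exact h.1)
      have hhi : t / m < K + 1 := (Nat.div_lt_iff_lt_mul hm).2 (by
        have : (K + 1) * m = m * K + m := by ring
        rw [this]; exact h.2)
      have : t / m = K := by omega
      rw [this]
    rw [Finset.sum_congr rfl hconst, Finset.sum_const, Nat.card_Ico]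
    have : m * K + m - m * K = m := by omega
    rw [this, nsmul_eq_mul]

lemma ar_lemma (G : ℕ → ℝ) {m K : ℕ} (hm : 0 < m) (hmK : m * K = n)
    (hmono : ∀ j k : ℕ, j ≤ k → G k ≤ G j) (hnn : ∀ j, 0 ≤ G j) :
    ∑ t : Fin n, (G (m * ((t : ℕ) / m)) - G (t : ℕ)) ≤ m * G 0 := by
  have pt : ∀ t : Fin n, G (m * ((t : ℕ) / m)) - G (t : ℕ)
      ≤ G (m * ((t : ℕ) / m)) - G (m * ((t : ℕ) / m + 1)) := by
    intro t
    have hle : (t : ℕ) ≤ m * ((t : ℕ) / m + 1) := by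
      calc (t : ℕ) = m * ((t : ℕ) / m) + (t : ℕ) % m := (Nat.div_add_mod _ _).symm
        _ ≤ m * ((t : ℕ) / m) + m := Nat.add_le_add_left (le_of_lt (Nat.mod_lt _ hm)) _
        _ = m * ((t : ℕ) / m + 1) := (Nat.mul_succ m _).symm
    exact sub_le_sub_left (hmono _ _ hle) _
  calc ∑ t : Fin n, (G (m * ((t : ℕ) / m)) - G (t : ℕ))
      ≤ ∑ t : Fin n, (G (m * ((t : ℕ) / m)) - G (m * ((t : ℕ) / m + 1))) :=
        Finset.sum_le_sum fun t _ => pt t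
    _ = ∑ t ∈ Finset.range n, (G (m * (t / m)) - G (m * (t / m + 1))) :=
        Fin.sum_univ_eq_sum_range (fun t => G (m * (t / m)) - G (m * (t / m + 1))) n
    _ = ∑ q ∈ Finset.range K, m * (G (m * q) - G (m * (q + 1))) := by
        rw [← hmK]
        exact grp (fun q => G (m * q) - G (m * (q + 1))) m hm K
    _ = m * (G (m * 0) - G (m * K)) := by
        rw [← Finset.mul_sum, Finset.sum_range_sub' (fun q => G (m * q)) K]
    _ ≤ m * G 0 := by
        have h0 : G (m * 0) = G 0 := by rw [Nat.mul_zero]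
        have := hnn (m * K)
        rw [h0]
        have hm0 : (0 : ℝ) ≤ (m : ℝ) := Nat.cast_nonneg m
        nlinarith


lemma transfer_single (i : Fin n) (g : X i → ℝ) :
    ∑ a : X i, marginal p i a * g a = ∑ x, p x * g (x i) := by
  unfold marginal
  simp only [Finset.sum_mul]
  rw [Finset.sum_comm]
  refine Finset.sum_congr rfl fun x _ => ?_
  rw [Finset.sum_eq_single (x i)]
  · simp
  · intro b _ hb
    rw [if_neg (fun h => hb h.symm), zero_mul]
  · simp

lemma phi_singleton (i : Fin n) : phi p {i} = entropy (marginal p i) := by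
  unfold phi entropy
  have h1 : ∀ x : ∀ j, X j, rdist p {i} x = marginal p i (x i) := by
    intro x
    unfold rdist subMarginal marginal
    refine Finset.sum_congr rfl fun y _ => ?_
    by_cases h : y i = x i
    · rw [if_pos h, if_pos ?_]
      intro j
      have hj : (j : Fin n) = i := Finset.mem_singleton.1 j.2
      obtain ⟨jv, hjm⟩ := j
      dsimp only at hj ⊢
      subst hj
      exact h
    · rw [if_neg h, if_neg (fun hall => h (hall ⟨i, Finset.mem_singleton_self i⟩))]
  rw [show ∑ x, p x * Real.log (rdist p {i} x) = ∑ x, p x * Real.log (marginal p i (x i))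
    from Finset.sum_congr rfl fun x _ => by rw [h1 x]]
  exact congrArg Neg.neg (transfer_single p i (fun a => Real.log (marginal p i a))).symm

lemma del_empty (hp1 : ∑ x, p x = 1) (i : Fin n) :
    del p i ∅ = entropy (marginal p i) := by
  unfold del
  rw [phi_empty p hp1, sub_zero]
  have : (insert i (∅ : Finset (Fin n))) = {i} := rfl
  rw [this]
  exact phi_singleton p i

lemma symm_mul_ct (i : Fin n) (τ : Equiv.Perm (Fin n)) (t : Fin n)
    (hτ : (τ.symm i : ℕ) = n - 1) : (τ * ct t).symm i = t := by
  have h1 : (τ * ct t).symm i = (ct t).symm (τ.symm i) := rfl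
  have h2 : ct t t = τ.symm i := Fin.ext (by rw [ct_self, hτ])
  rw [h1, ← h2, Equiv.symm_apply_apply]

lemma perm_decomp (i : Fin n) (F : Equiv.Perm (Fin n) → ℝ) :
    ∑ σ : Equiv.Perm (Fin n), F σ
      = ∑ τt ∈ (Finset.univ.filter
          (fun τ : Equiv.Perm (Fin n) => ((τ.symm i : ℕ) = n - 1))) ×ˢ
            (Finset.univ : Finset (Fin n)),
          F (τt.1 * ct τt.2) := by
  refine Finset.sum_nbij' (fun σ => (σ * (ct (σ.symm i))⁻¹, σ.symm i))
    (fun τt => τt.1 * ct τt.2) ?_ ?_ ?_ ?_ ?_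
  · intro σ _
    refine Finset.mem_product.2 ⟨Finset.mem_filter.2 ⟨Finset.mem_univ _, ?_⟩, Finset.mem_univ _⟩
    have h1 : (σ * (ct (σ.symm i))⁻¹).symm i = ct (σ.symm i) (σ.symm i) := rfl
    rw [h1, ct_self]
  · intro τt _
    exact Finset.mem_univ _
  · intro σ _
    exact inv_mul_cancel_right σ (ct (σ.symm i))
  · rintro ⟨τ, t⟩ hmem
    have hτ : ((τ.symm i : ℕ)) = n - 1 :=
      (Finset.mem_filter.1 (Finset.mem_product.1 hmem).1).2
    have hs : (τ * ct t).symm i = t := symm_mul_ct i τ t hτ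
    show (τ * ct t * (ct ((τ * ct t).symm i))⁻¹, (τ * ct t).symm i) = (τ, t)
    rw [hs, mul_inv_cancel_right]
  · intro σ _
    show F σ = F (σ * (ct (σ.symm i))⁻¹ * ct (σ.symm i))
    rw [inv_mul_cancel_right]

lemma Acard (i : Fin n) :
    (((Finset.univ.filter
        (fun τ : Equiv.Perm (Fin n) => ((τ.symm i : ℕ) = n - 1))).card : ℝ)) * n
      = (Nat.factorial n : ℝ) := by
  have h := perm_decomp i (fun _ => (1 : ℝ))
  simp only [Finset.sum_const, nsmul_eq_mul, mul_one] at h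
  rw [Finset.card_univ, Fintype.card_perm, Fintype.card_fin, Finset.card_product,
    Finset.card_univ, Fintype.card_fin] at h
  push_cast at h
  linarith

lemma step3 (hp0 : ∀ x, 0 ≤ p x) (hp1 : ∑ x, p x = 1) (i : Fin n) {m K : ℕ}
    (hm : 0 < m) (hmK : m * K = n) :
    ∑ σ : Equiv.Perm (Fin n),
      (del p i (PrS σ (m * ((σ.symm i : ℕ) / m))) - del p i (PrS σ (σ.symm i : ℕ)))
      ≤ ((Finset.univ.filter
          (fun τ : Equiv.Perm (Fin n) => ((τ.symm i : ℕ) = n - 1))).card : ℝ)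
        * (m * entropy (marginal p i)) := by
  calc ∑ σ : Equiv.Perm (Fin n),
        (del p i (PrS σ (m * ((σ.symm i : ℕ) / m))) - del p i (PrS σ (σ.symm i : ℕ)))
      = ∑ τt ∈ (Finset.univ.filter
          (fun τ : Equiv.Perm (Fin n) => ((τ.symm i : ℕ) = n - 1))) ×ˢ
            (Finset.univ : Finset (Fin n)),
          (del p i (PrS (τt.1 * ct τt.2) (m * (((τt.1 * ct τt.2).symm i : ℕ) / m)))
            - del p i (PrS (τt.1 * ct τt.2) ((τt.1 * ct τt.2).symm i : ℕ))) :=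
        perm_decomp i _
    _ = ∑ τ ∈ Finset.univ.filter
          (fun τ : Equiv.Perm (Fin n) => ((τ.symm i : ℕ) = n - 1)),
          ∑ t : Fin n,
          (del p i (PrS (τ * ct t) (m * (((τ * ct t).symm i : ℕ) / m)))
            - del p i (PrS (τ * ct t) ((τ * ct t).symm i : ℕ))) := by
        exact Finset.sum_product _ _ _
    _ = ∑ τ ∈ Finset.univ.filter
          (fun τ : Equiv.Perm (Fin n) => ((τ.symm i : ℕ) = n - 1)),
          ∑ t : Fin n,
          (del p i (PrS τ (m * ((t : ℕ) / m))) - del p i (PrS τ (t : ℕ))) := by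
        refine Finset.sum_congr rfl fun τ hτ => Finset.sum_congr rfl fun t _ => ?_
        have hτ' : ((τ.symm i : ℕ) = n - 1) := (Finset.mem_filter.1 hτ).2
        have hs : (τ * ct t).symm i = t := symm_mul_ct i τ t hτ'
        rw [hs]
        have hle : m * ((t : ℕ) / m) ≤ (t : ℕ) := by
          rw [mul_comm]; exact Nat.div_mul_le_self _ _
        rw [PrS_ct τ t _ hle, PrS_ct τ t _ (le_refl _)]
    _ ≤ ∑ _τ ∈ Finset.univ.filter
          (fun τ : Equiv.Perm (Fin n) => ((τ.symm i : ℕ) = n - 1)),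
          (m * entropy (marginal p i)) := by
        refine Finset.sum_le_sum fun τ _ => ?_
        have har := ar_lemma (fun j => del p i (PrS τ j)) hm hmK
          (fun j k hjk => delta_antitone p hp0 hp1 i (PrS_mono τ hjk))
          (fun j => delta_nonneg p hp0 i _)
        refine har.trans (le_of_eq ?_)
        show m * del p i (PrS τ 0) = m * entropy (marginal p i)
        rw [PrS_zero, del_empty p hp1 i]
    _ = _ := by
        rw [Finset.sum_const, nsmul_eq_mul]

end S17

open S17

set_option maxHeartbeats 2000000 in
/-- Mixture bound on the cumulative conditional total correlation over a
uniformly random order: for a uniformly random permutation `σ` of the `n`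
variables partitioned into `K` consecutive blocks of equal size `n / K`,
the expected cumulative conditional total correlation is at most
`(1/K)·∑ i H(X i)`. -/
theorem stmt_17 (n K : ℕ) (hK : 0 < K) (hdvd : K ∣ n)
    (X : Fin n → Type*) [∀ i, Fintype (X i)]
    (p : (∀ i, X i) → ℝ) (hp0 : ∀ x, 0 ≤ p x) (hp1 : ∑ x, p x = 1) :
    (1 / (Nat.factorial n : ℝ)) *
        (∑ σ : Equiv.Perm (Fin n), ∑ k : Fin K,
          expCondTC p (permBlock σ k) (permEarlier σ k)) ≤
      (1 / (K : ℝ)) * ∑ i, entropy (marginal p i) := by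
  classical
  have hσ : ∀ σ : Equiv.Perm (Fin n),
      ∑ k : Fin K, expCondTC p (permBlock σ k) (permEarlier σ k)
        = ∑ i : Fin n, (del p i (Ediv (n / K) σ ((σ.symm i : ℕ) / (n / K)))
            - del p i (PrS σ (σ.symm i : ℕ))) := by
    intro σ
    have e1 : ∀ k : Fin K, expCondTC p (permBlock σ k) (permEarlier σ k)
        = (∑ i ∈ permBlock σ k,
            del p i (Ediv (n / K) σ ((σ.symm i : ℕ) / (n / K))))
          - (phi p (Ediv (n / K) σ ((k : ℕ) + 1))
            - phi p (Ediv (n / K) σ (k : ℕ))) := by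
      intro k
      rw [expCondTC_eq p hp0, block_union σ k, permEarlier_eq σ k]
      congr 1
      refine Finset.sum_congr rfl fun i hi => ?_
      have hd : ((σ.symm i : ℕ) / (n / K)) = (k : ℕ) := (Finset.mem_filter.1 hi).2
      rw [hd]
      rfl
    rw [Finset.sum_congr rfl (fun k _ => e1 k), Finset.sum_sub_distrib]
    have tele : ∑ k : Fin K, (phi p (Ediv (n / K) σ ((k : ℕ) + 1))
        - phi p (Ediv (n / K) σ (k : ℕ)))
        = phi p Finset.univ := by
      rw [Fin.sum_univ_eq_sum_range (fun j => phi p (Ediv (n / K) σ (j + 1))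
        - phi p (Ediv (n / K) σ j)) K]
      rw [Finset.sum_range_sub (fun j => phi p (Ediv (n / K) σ j)) K]
      rw [Ediv_top hK hdvd σ, Ediv_zero, phi_empty p hp1, sub_zero]
    rw [tele, chain_rule p hp1 σ, Finset.sum_sub_distrib]
    congr 1
    refine fiber_sum _ _ (fun i => ?_)
    have hn : 0 < n := i.pos
    have hm : 0 < n / K := Nat.div_pos (Nat.le_of_dvd hn hdvd) hK
    rw [Nat.div_lt_iff_lt_mul hm]
    calc (σ.symm i : ℕ) < n := (σ.symm i).isLt
      _ = K * (n / K) := (Nat.mul_div_cancel' hdvd).symm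
  rw [Finset.sum_congr rfl (fun σ _ => hσ σ), Finset.sum_comm]
  have hbound : ∀ i : Fin n,
      ∑ σ : Equiv.Perm (Fin n), (del p i (Ediv (n / K) σ ((σ.symm i : ℕ) / (n / K)))
          - del p i (PrS σ (σ.symm i : ℕ)))
        ≤ ((Nat.factorial n : ℝ) / K) * entropy (marginal p i) := by
    intro i
    have hn : 0 < n := i.pos
    have hm : 0 < n / K := Nat.div_pos (Nat.le_of_dvd hn hdvd) hK
    have hmK : (n / K) * K = n := Nat.div_mul_cancel hdvd
    have h1 : ∀ σ : Equiv.Perm (Fin n), Ediv (n / K) σ ((σ.symm i : ℕ) / (n / K))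
        = PrS σ ((n / K) * ((σ.symm i : ℕ) / (n / K))) :=
      fun σ => Ediv_eq_PrS hm σ _
    calc ∑ σ : Equiv.Perm (Fin n), (del p i (Ediv (n / K) σ ((σ.symm i : ℕ) / (n / K)))
          - del p i (PrS σ (σ.symm i : ℕ)))
        = ∑ σ : Equiv.Perm (Fin n),
            (del p i (PrS σ ((n / K) * ((σ.symm i : ℕ) / (n / K))))
              - del p i (PrS σ (σ.symm i : ℕ))) :=
          Finset.sum_congr rfl fun σ _ => by rw [h1 σ]
      _ ≤ ((Finset.univ.filter
            (fun τ : Equiv.Perm (Fin n) => ((τ.symm i : ℕ) = n - 1))).card : ℝ)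
          * ((n / K : ℕ) * entropy (marginal p i)) := step3 p hp0 hp1 i hm hmK
      _ = ((Nat.factorial n : ℝ) / K) * entropy (marginal p i) := by
          have hA := Acard i
          have hKne : (K : ℝ) ≠ 0 := Nat.cast_ne_zero.2 hK.ne'
          have hcast : ((n / K : ℕ) : ℝ) * K = n := by exact_mod_cast hmK
          set c := ((Finset.univ.filter
            (fun τ : Equiv.Perm (Fin n) => ((τ.symm i : ℕ) = n - 1))).card : ℝ)
          have hkey : c * ((n / K : ℕ) : ℝ) = (Nat.factorial n : ℝ) / K := by
            rw [eq_div_iff hKne, mul_assoc, hcast, hA]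
          rw [← mul_assoc, hkey]
  have hfacpos : (0 : ℝ) < (Nat.factorial n : ℝ) := by
    exact_mod_cast Nat.factorial_pos n
  calc (1 / (Nat.factorial n : ℝ)) * ∑ i : Fin n, ∑ σ : Equiv.Perm (Fin n),
        (del p i (Ediv (n / K) σ ((σ.symm i : ℕ) / (n / K)))
          - del p i (PrS σ (σ.symm i : ℕ)))
      ≤ (1 / (Nat.factorial n : ℝ)) * ∑ i : Fin n,
          ((Nat.factorial n : ℝ) / K) * entropy (marginal p i) := by
        refine mul_le_mul_of_nonneg_left (Finset.sum_le_sum fun i _ => hbound i) ?_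
        positivity
    _ = (1 / (K : ℝ)) * ∑ i, entropy (marginal p i) := by
        rw [← Finset.mul_sum]
        field_simp


end
end
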